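/- arXiv:2406.00054 — 4 statements merged into one kernel-verified Lean document; each statement's English description precedes it below -/
import Mathlib

section
/- For every stage τ ∈ {0, …, ℓ} of a finite zs-POSG there exists a constant κ_τ ≥ 0 such that the optimal value function v*_τ is κ_τ-Lipschitz continuous over occupancy states with respect to the 1-norm: |v*_τ(s) − v*_τ(s′)| ≤ κ_τ · ‖s − s′‖₁ for all occupancy states s, s′ ∈ Δ(X × O_τ). -/
open scoped BigOperators

section ZSPOSG

/-- A finitely supported probability distribution on a finite type,
represented as a nonnegative real-valued function summing to one. -/
def IsDist {α : Type} [Fintype α] (f : α → ℝ) : Prop :=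
  (∀ a, 0 ≤ f a) ∧ ∑ a, f a = 1

/-- Stage-`τ` histories of player 1: sequences `(u¹_0, z¹_1, …, u¹_{τ-1}, z¹_τ)`. -/
abbrev Hist1 (U1 Z1 : Type) (τ : ℕ) : Type := Fin τ → U1 × Z1

/-- Stage-`τ` histories of player 2. -/
abbrev Hist2 (U2 Z2 : Type) (τ : ℕ) : Type := Fin τ → U2 × Z2

/-- Stage-`τ` joint histories. -/
abbrev JHist (U1 Z1 U2 Z2 : Type) (τ : ℕ) : Type :=
  Hist1 U1 Z1 τ × Hist2 U2 Z2 τ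

/-- Stage-`τ` stochastic decision rules of player 1. -/
abbrev DR1 (U1 Z1 : Type) [Fintype U1] (τ : ℕ) : Type :=
  {a : Hist1 U1 Z1 τ → U1 → ℝ // ∀ o, IsDist (a o)}

/-- Stage-`τ` stochastic decision rules of player 2. -/
abbrev DR2 (U2 Z2 : Type) [Fintype U2] (τ : ℕ) : Type :=
  {a : Hist2 U2 Z2 τ → U2 → ℝ // ∀ o, IsDist (a o)}

variable {X U1 U2 Z1 Z2 : Type}
variable [Fintype X] [Fintype U1] [Fintype U2] [Fintype Z1] [Fintype Z2]

/-- Expected immediate reward `R(s_τ, a_τ)`. -/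
noncomputable def Rstage (r : X → U1 × U2 → ℝ) (τ : ℕ)
    (s : X × JHist U1 Z1 U2 Z2 τ → ℝ) (a1 : DR1 U1 Z1 τ) (a2 : DR2 U2 Z2 τ) : ℝ :=
  ∑ xo : X × JHist U1 Z1 U2 Z2 τ, s xo *
    ∑ u : U1 × U2, a1.1 xo.2.1 u.1 * a2.1 xo.2.2 u.2 * r xo.1 u

/-- Occupancy-state transition `T(s_τ, a_τ)`:
`T(s,a)(y,(o,u,z)) = a(u|o) ⬝ Σ_x s(x,o) p(y,z|x,u)`. -/
noncomputable def Tstage (p : X → U1 × U2 → X × (Z1 × Z2) → ℝ) (τ : ℕ)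
    (s : X × JHist U1 Z1 U2 Z2 τ → ℝ) (a1 : DR1 U1 Z1 τ) (a2 : DR2 U2 Z2 τ) :
    X × JHist U1 Z1 U2 Z2 (τ + 1) → ℝ := fun yo =>
  let o1 : Hist1 U1 Z1 τ := fun i => yo.2.1 i.castSucc
  let o2 : Hist2 U2 Z2 τ := fun i => yo.2.2 i.castSucc
  let u1 := (yo.2.1 (Fin.last τ)).1
  let z1 := (yo.2.1 (Fin.last τ)).2
  let u2 := (yo.2.2 (Fin.last τ)).1
  let z2 := (yo.2.2 (Fin.last τ)).2
  a1.1 o1 u1 * a2.1 o2 u2 * ∑ x : X, s (x, (o1, o2)) * p x (u1, u2) (yo.1, (z1, z2))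

/-- Optimal value functions defined by backward induction: `vstar p r γ k τ s` is
`v*_τ(s)` when `k = ℓ - τ` stages remain; `vstar … 0 _ ≡ 0` and
`v*_τ(s) = max_{a¹} min_{a²} [R(s,a) + γ v*_{τ+1}(T(s,a))]`. -/
noncomputable def vstar (p : X → U1 × U2 → X × (Z1 × Z2) → ℝ) (r : X → U1 × U2 → ℝ)
    (γ : ℝ) : (k : ℕ) → (τ : ℕ) → (X × JHist U1 Z1 U2 Z2 τ → ℝ) → ℝ
  | 0, _, _ => 0
  | k + 1, τ, s =>
      ⨆ a1 : DR1 U1 Z1 τ, ⨅ a2 : DR2 U2 Z2 τ,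
        Rstage r τ s a1 a2 + γ * vstar p r γ k (τ + 1) (Tstage p τ s a1 a2)

/-- Player-2 marginal occupancy state `s^{m,2}_τ(o²) = Σ_x Σ_{o¹} s(x,(o¹,o²))`. -/
noncomputable def marg2 (τ : ℕ) (s : X × JHist U1 Z1 U2 Z2 τ → ℝ)
    (o2 : Hist2 U2 Z2 τ) : ℝ :=
  ∑ x : X, ∑ o1 : Hist1 U1 Z1 τ, s (x, (o1, o2))

/-- Conditional occupancy state `s^{c,o²}_τ(x,o¹) = s(x,(o¹,o²)) / s^{m,2}_τ(o²)`. -/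
noncomputable def condOcc (τ : ℕ) (s : X × JHist U1 Z1 U2 Z2 τ → ℝ)
    (o2 : Hist2 U2 Z2 τ) : X × Hist1 U1 Z1 τ → ℝ :=
  fun xo1 => s (xo1.1, (xo1.2, o2)) / marg2 τ s o2

/-- Recomposition `c ⊙ m` of a conditional occupancy-state family `c` with a
player-2 marginal `m`: `(c ⊙ m)(x,(o¹,o²)) = c(o²)(x,o¹) ⬝ m(o²)`. -/
noncomputable def odot (τ : ℕ) (c : Hist2 U2 Z2 τ → X × Hist1 U1 Z1 τ → ℝ)
    (m : Hist2 U2 Z2 τ → ℝ) : X × JHist U1 Z1 U2 Z2 τ → ℝ :=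
  fun xo => c xo.2.2 (xo.1, xo.2.1) * m xo.2.2

/-- 1-norm distance between two real-valued functions on a finite type. -/
noncomputable def dist1 {α : Type} [Fintype α] (f g : α → ℝ) : ℝ :=
  ∑ a : α, |f a - g a|

/-- Full trajectories of length `τ`: the states `x_0,…,x_τ` together with the
per-player controls and observations `((u¹_t, z¹_{t+1}), (u²_t, z²_{t+1}))` for `t < τ`. -/
abbrev Traj (X U1 Z1 U2 Z2 : Type) (τ : ℕ) : Type :=
  (Fin (τ + 1) → X) × (Fin τ → (U1 × Z1) × (U2 × Z2))

/-- The stage-`t` joint history determined by the first `t` moves of a trajectory. -/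
def histUpTo (τ : ℕ) (mv : Fin τ → (U1 × Z1) × (U2 × Z2)) (t : ℕ) (ht : t ≤ τ) :
    JHist U1 Z1 U2 Z2 t :=
  (fun i => (mv (Fin.castLE ht i)).1, fun i => (mv (Fin.castLE ht i)).2)

/-- Probability of a trajectory under the process induced by `s0` and a joint
policy: `x_0 ∼ s0`, `u_t ∼ a_t(·|o_t)`, `(x_{t+1}, z_{t+1}) ∼ p(·|x_t, u_t)`. -/
noncomputable def trajProb (p : X → U1 × U2 → X × (Z1 × Z2) → ℝ) (s0 : X → ℝ)
    (pol1 : (t : ℕ) → DR1 U1 Z1 t) (pol2 : (t : ℕ) → DR2 U2 Z2 t)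
    (τ : ℕ) (w : Traj X U1 Z1 U2 Z2 τ) : ℝ :=
  s0 (w.1 0) * ∏ t : Fin τ,
    ((pol1 t.1).1 (histUpTo τ w.2 t.1 t.isLt.le).1 ((w.2 t).1.1) *
     (pol2 t.1).1 (histUpTo τ w.2 t.1 t.isLt.le).2 ((w.2 t).2.1) *
     p (w.1 t.castSucc) ((w.2 t).1.1, (w.2 t).2.1)
       (w.1 t.succ, ((w.2 t).1.2, (w.2 t).2.2)))

variable [DecidableEq X] [DecidableEq U1] [DecidableEq U2] [DecidableEq Z1] [DecidableEq Z2]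

/-- The occupancy state induced by `(s0, a_0, …, a_{τ-1})`:
`s_τ(x,o) = Pr{x_τ = x, o_τ = o}`. -/
noncomputable def occInduced (p : X → U1 × U2 → X × (Z1 × Z2) → ℝ) (s0 : X → ℝ)
    (pol1 : (t : ℕ) → DR1 U1 Z1 t) (pol2 : (t : ℕ) → DR2 U2 Z2 t)
    (τ : ℕ) : X × JHist U1 Z1 U2 Z2 τ → ℝ := fun xo =>
  ∑ w : Traj X U1 Z1 U2 Z2 τ,
    if w.1 (Fin.last τ) = xo.1 ∧ histUpTo τ w.2 τ le_rfl = xo.2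
    then trajProb p s0 pol1 pol2 τ w else 0

/-- `α^{a_{τ:}}_τ(x,o)` defined by the backward recursion `α_ℓ ≡ 0` and
`α_τ(x,o) = Σ_u a_τ(u|o) [r(x,u) + γ Σ_{y,z} p(y,z|x,u) α_{τ+1}(y,(o,u,z))]`;
`alphaRec … k τ` is `α_τ` when `k = ℓ - τ` stages remain. -/
noncomputable def alphaRec (p : X → U1 × U2 → X × (Z1 × Z2) → ℝ) (r : X → U1 × U2 → ℝ)
    (γ : ℝ) (pol1 : (t : ℕ) → DR1 U1 Z1 t) (pol2 : (t : ℕ) → DR2 U2 Z2 t) :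
    (k : ℕ) → (τ : ℕ) → X → JHist U1 Z1 U2 Z2 τ → ℝ
  | 0, _, _, _ => 0
  | k + 1, τ, x, o =>
      ∑ u : U1 × U2, (pol1 τ).1 o.1 u.1 * (pol2 τ).1 o.2 u.2 *
        (r x u + γ * ∑ yz : X × (Z1 × Z2), p x u yz *
          alphaRec p r γ pol1 pol2 k (τ + 1) yz.1
            (Fin.snoc o.1 (u.1, yz.2.1), Fin.snoc o.2 (u.2, yz.2.2)))

/-- Expected discounted return `E[Σ_{t=τ}^{ℓ-1} γ^{t-τ} r(x_t, u_t)]` under the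
process induced by `s0` and the joint policy. -/
noncomputable def expReturnFrom (p : X → U1 × U2 → X × (Z1 × Z2) → ℝ)
    (r : X → U1 × U2 → ℝ) (γ : ℝ) (s0 : X → ℝ)
    (pol1 : (t : ℕ) → DR1 U1 Z1 t) (pol2 : (t : ℕ) → DR2 U2 Z2 t)
    (ℓ τ : ℕ) : ℝ :=
  ∑ w : Traj X U1 Z1 U2 Z2 ℓ, trajProb p s0 pol1 pol2 ℓ w *
    ∑ t : Fin ℓ, if τ ≤ t.1
      then γ ^ (t.1 - τ) * r (w.1 t.castSucc) ((w.2 t).1.1, (w.2 t).2.1) else 0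


set_option linter.unusedSectionVars false


lemma dist1_nonneg {α : Type} [Fintype α] (f g : α → ℝ) : 0 ≤ dist1 f g :=
  Finset.sum_nonneg fun _ _ => abs_nonneg _

lemma dist1_comm {α : Type} [Fintype α] (f g : α → ℝ) : dist1 f g = dist1 g f := by
  unfold dist1; exact Finset.sum_congr rfl fun a _ => abs_sub_comm _ _

instance instNonemptyDR1 [Nonempty U1] {τ : ℕ} : Nonempty (DR1 U1 Z1 τ) :=
  ⟨⟨fun _ _ => (Fintype.card U1 : ℝ)⁻¹, fun o => ⟨fun u => by positivity, by
    simp only [Finset.sum_const, Finset.card_univ, nsmul_eq_mul]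
    exact mul_inv_cancel₀ (Nat.cast_ne_zero.mpr Fintype.card_ne_zero)⟩⟩⟩

instance instNonemptyDR2 [Nonempty U2] {τ : ℕ} : Nonempty (DR2 U2 Z2 τ) :=
  ⟨⟨fun _ _ => (Fintype.card U2 : ℝ)⁻¹, fun o => ⟨fun u => by positivity, by
    simp only [Finset.sum_const, Finset.card_univ, nsmul_eq_mul]
    exact mul_inv_cancel₀ (Nat.cast_ne_zero.mpr Fintype.card_ne_zero)⟩⟩⟩

lemma sum_joint {τ : ℕ} (a1 : DR1 U1 Z1 τ) (a2 : DR2 U2 Z2 τ)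
    (o1 : Hist1 U1 Z1 τ) (o2 : Hist2 U2 Z2 τ) :
    ∑ u : U1 × U2, a1.1 o1 u.1 * a2.1 o2 u.2 = 1 := by
  rw [Fintype.sum_prod_type, ← Finset.sum_mul_sum, (a1.2 o1).2, (a2.2 o2).2, one_mul]

/-- Lemma A: Rstage is Lipschitz in s. -/
lemma Rstage_lip (r : X → U1 × U2 → ℝ) {τ : ℕ}
    (s s' : X × JHist U1 Z1 U2 Z2 τ → ℝ) (a1 : DR1 U1 Z1 τ) (a2 : DR2 U2 Z2 τ)
    {M : ℝ} (hM : ∀ x u, |r x u| ≤ M) :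
    |Rstage r τ s a1 a2 - Rstage r τ s' a1 a2| ≤ M * dist1 s s' := by
  unfold Rstage
  rw [← Finset.sum_sub_distrib]
  calc |∑ xo : X × JHist U1 Z1 U2 Z2 τ,
        (s xo * ∑ u : U1 × U2, a1.1 xo.2.1 u.1 * a2.1 xo.2.2 u.2 * r xo.1 u -
         s' xo * ∑ u : U1 × U2, a1.1 xo.2.1 u.1 * a2.1 xo.2.2 u.2 * r xo.1 u)|
      ≤ ∑ xo : X × JHist U1 Z1 U2 Z2 τ,
        |(s xo - s' xo) * ∑ u : U1 × U2, a1.1 xo.2.1 u.1 * a2.1 xo.2.2 u.2 * r xo.1 u| := by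
        refine le_trans (le_of_eq ?_) (Finset.abs_sum_le_sum_abs _ _)
        congr 1; refine Finset.sum_congr rfl fun xo _ => ?_; ring
    _ ≤ ∑ xo : X × JHist U1 Z1 U2 Z2 τ, |s xo - s' xo| * M := by
        refine Finset.sum_le_sum fun xo _ => ?_
        rw [abs_mul]
        refine mul_le_mul_of_nonneg_left ?_ (abs_nonneg _)
        calc |∑ u : U1 × U2, a1.1 xo.2.1 u.1 * a2.1 xo.2.2 u.2 * r xo.1 u|
            ≤ ∑ u : U1 × U2, |a1.1 xo.2.1 u.1 * a2.1 xo.2.2 u.2 * r xo.1 u| :=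
              Finset.abs_sum_le_sum_abs _ _
          _ ≤ ∑ u : U1 × U2, a1.1 xo.2.1 u.1 * a2.1 xo.2.2 u.2 * M := by
              refine Finset.sum_le_sum fun u _ => ?_
              rw [abs_mul, abs_mul, abs_of_nonneg ((a1.2 xo.2.1).1 u.1),
                abs_of_nonneg ((a2.2 xo.2.2).1 u.2)]
              have h0 : (0:ℝ) ≤ M := le_trans (abs_nonneg _) (hM xo.1 u)
              exact mul_le_mul_of_nonneg_left (hM xo.1 u)
                (mul_nonneg ((a1.2 xo.2.1).1 u.1) ((a2.2 xo.2.2).1 u.2))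
          _ = M := by rw [← Finset.sum_mul, sum_joint, one_mul]
    _ = M * dist1 s s' := by rw [dist1, Finset.mul_sum]; exact Finset.sum_congr rfl fun _ _ => mul_comm _ _

/-- snoc equivalence -/
def snocEquiv (β : Type) (τ : ℕ) : (Fin (τ+1) → β) ≃ ((Fin τ → β) × β) where
  toFun f := (Fin.init f, f (Fin.last τ))
  invFun g := Fin.snoc g.1 g.2
  left_inv f := Fin.snoc_init_self f
  right_inv g := by simp [Fin.init_snoc]


/-- packing equivalence for reindexing the big sum -/
def packEquiv (X U1 Z1 U2 Z2 : Type) (τ : ℕ) :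
    ((JHist U1 Z1 U2 Z2 τ) × ((U1 × U2) × (X × (Z1 × Z2)))) ≃
    (X × (((Fin τ → U1 × Z1) × (U1 × Z1)) × ((Fin τ → U2 × Z2) × (U2 × Z2)))) where
  toFun t := (t.2.2.1, ((t.1.1, (t.2.1.1, t.2.2.2.1)), (t.1.2, (t.2.1.2, t.2.2.2.2))))
  invFun t := ((t.2.1.1, t.2.2.1), ((t.2.1.2.1, t.2.2.2.1), (t.1, (t.2.1.2.2, t.2.2.2.2))))
  left_inv t := rfl
  right_inv t := rfl

lemma reidx (f : X × JHist U1 Z1 U2 Z2 (τ'+1) → ℝ) :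
    ∑ yo, f yo = ∑ q : X × (((Fin τ' → U1 × Z1) × (U1 × Z1)) × ((Fin τ' → U2 × Z2) × (U2 × Z2))),
      f (q.1, (Fin.snoc q.2.1.1 q.2.1.2, Fin.snoc q.2.2.1 q.2.2.2)) := by
  rw [← Equiv.sum_comp (Equiv.prodCongr (Equiv.refl X)
    (Equiv.prodCongr (snocEquiv (U1 × Z1) τ').symm (snocEquiv (U2 × Z2) τ').symm)) f]
  rfl

/-- Lemma B: Tstage is 1-Lipschitz in s. -/
lemma Tstage_lip (p : X → U1 × U2 → X × (Z1 × Z2) → ℝ) (hp : ∀ x u, IsDist (p x u))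
    {τ : ℕ} (s s' : X × JHist U1 Z1 U2 Z2 τ → ℝ) (a1 : DR1 U1 Z1 τ) (a2 : DR2 U2 Z2 τ) :
    dist1 (Tstage p τ s a1 a2) (Tstage p τ s' a1 a2) ≤ dist1 s s' := by
  unfold dist1 Tstage
  -- rewrite each entry
  have hentry : ∀ yo : X × JHist U1 Z1 U2 Z2 (τ+1),
      |(let o1 : Hist1 U1 Z1 τ := fun i => yo.2.1 i.castSucc;
        let o2 : Hist2 U2 Z2 τ := fun i => yo.2.2 i.castSucc;
        a1.1 o1 (yo.2.1 (Fin.last τ)).1 * a2.1 o2 (yo.2.2 (Fin.last τ)).1 *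
          ∑ x : X, s (x, (o1, o2)) * p x ((yo.2.1 (Fin.last τ)).1, (yo.2.2 (Fin.last τ)).1)
            (yo.1, ((yo.2.1 (Fin.last τ)).2, (yo.2.2 (Fin.last τ)).2))) -
       (let o1 : Hist1 U1 Z1 τ := fun i => yo.2.1 i.castSucc;
        let o2 : Hist2 U2 Z2 τ := fun i => yo.2.2 i.castSucc;
        a1.1 o1 (yo.2.1 (Fin.last τ)).1 * a2.1 o2 (yo.2.2 (Fin.last τ)).1 *
          ∑ x : X, s' (x, (o1, o2)) * p x ((yo.2.1 (Fin.last τ)).1, (yo.2.2 (Fin.last τ)).1)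
            (yo.1, ((yo.2.1 (Fin.last τ)).2, (yo.2.2 (Fin.last τ)).2)))| =
      a1.1 (fun i => yo.2.1 i.castSucc) (yo.2.1 (Fin.last τ)).1 *
      a2.1 (fun i => yo.2.2 i.castSucc) (yo.2.2 (Fin.last τ)).1 *
      |∑ x : X, (s (x, (fun i => yo.2.1 i.castSucc, fun i => yo.2.2 i.castSucc)) -
                 s' (x, (fun i => yo.2.1 i.castSucc, fun i => yo.2.2 i.castSucc))) *
          p x ((yo.2.1 (Fin.last τ)).1, (yo.2.2 (Fin.last τ)).1)
            (yo.1, ((yo.2.1 (Fin.last τ)).2, (yo.2.2 (Fin.last τ)).2))| := by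
    intro yo
    simp only []
    rw [← mul_sub, abs_mul, ← Finset.sum_sub_distrib]
    rw [abs_of_nonneg (mul_nonneg ((a1.2 _).1 _) ((a2.2 _).1 _))]
    congr 1
    congr 1
    exact Finset.sum_congr rfl fun x _ => by ring
  calc ∑ yo : X × JHist U1 Z1 U2 Z2 (τ+1), _
      ≤ ∑ yo : X × JHist U1 Z1 U2 Z2 (τ+1), ∑ x : X,
          a1.1 (fun i => yo.2.1 i.castSucc) (yo.2.1 (Fin.last τ)).1 *
          a2.1 (fun i => yo.2.2 i.castSucc) (yo.2.2 (Fin.last τ)).1 *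
          (|s (x, (fun i => yo.2.1 i.castSucc, fun i => yo.2.2 i.castSucc)) -
            s' (x, (fun i => yo.2.1 i.castSucc, fun i => yo.2.2 i.castSucc))| *
           p x ((yo.2.1 (Fin.last τ)).1, (yo.2.2 (Fin.last τ)).1)
             (yo.1, ((yo.2.1 (Fin.last τ)).2, (yo.2.2 (Fin.last τ)).2))) := by
        refine Finset.sum_le_sum fun yo _ => ?_
        rw [hentry yo, ← Finset.mul_sum]
        have hnn : 0 ≤ a1.1 (fun i => yo.2.1 i.castSucc) (yo.2.1 (Fin.last τ)).1 *
            a2.1 (fun i => yo.2.2 i.castSucc) (yo.2.2 (Fin.last τ)).1 :=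
          mul_nonneg ((a1.2 _).1 _) ((a2.2 _).1 _)
        refine mul_le_mul_of_nonneg_left ?_ hnn
        refine le_trans (Finset.abs_sum_le_sum_abs _ _) (Finset.sum_le_sum fun x _ => ?_)
        rw [abs_mul, abs_of_nonneg ((hp x _).1 _)]
    _ = dist1 s s' := by
        rw [Finset.sum_comm]
        rw [dist1, Fintype.sum_prod_type]
        refine Finset.sum_congr rfl fun x _ => ?_
        rw [reidx]
        rw [← Equiv.sum_comp (packEquiv X U1 Z1 U2 Z2 τ)]
        simp only [packEquiv, Equiv.coe_fn_mk, Fin.snoc_castSucc, Fin.snoc_last]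
        rw [Fintype.sum_prod_type]
        refine Finset.sum_congr rfl fun o _ => ?_
        rw [Fintype.sum_prod_type]
        simp only [Prod.mk.eta]
        have h1 : ∀ u : U1 × U2, ∑ yz : X × Z1 × Z2,
            a1.1 o.1 u.1 * a2.1 o.2 u.2 * (|s (x, o) - s' (x, o)| * p x u yz) =
            a1.1 o.1 u.1 * a2.1 o.2 u.2 * |s (x, o) - s' (x, o)| := by
          intro u
          rw [← Finset.mul_sum, ← Finset.mul_sum, (hp x u).2, mul_one]
        rw [Finset.sum_congr rfl (fun u _ => h1 u), ← Finset.sum_mul, sum_joint, one_mul]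


lemma supinf_comp {ι ι' : Type*} [Nonempty ι] [Nonempty ι'] (f g : ι → ι' → ℝ) {ε B : ℝ}
    (hfb : ∀ a b, |f a b| ≤ B) (hgb : ∀ a b, |g a b| ≤ B)
    (hfg : ∀ a b, |f a b - g a b| ≤ ε) :
    |(⨆ a, ⨅ b, f a b) - (⨆ a, ⨅ b, g a b)| ≤ ε := by
  have hbb : ∀ (h : ι → ι' → ℝ), (∀ a b, |h a b| ≤ B) → ∀ a, BddBelow (Set.range (h a)) := by
    intro h hb a
    exact ⟨-B, by rintro y ⟨b, rfl⟩; exact (abs_le.1 (hb a b)).1⟩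
  have hba : ∀ (h : ι → ι' → ℝ), (∀ a b, |h a b| ≤ B) →
      BddAbove (Set.range fun a => ⨅ b, h a b) := by
    intro h hb
    refine ⟨B, ?_⟩
    rintro y ⟨a, rfl⟩
    exact ciInf_le_of_le (hbb h hb a) (Classical.arbitrary ι') ((abs_le.1 (hb a _)).2)
  have key : ∀ (f g : ι → ι' → ℝ), (∀ a b, |f a b| ≤ B) → (∀ a b, |g a b| ≤ B) →
      (∀ a b, |f a b - g a b| ≤ ε) →
      (⨆ a, ⨅ b, f a b) ≤ (⨆ a, ⨅ b, g a b) + ε := by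
    intro f g hfb hgb hfg
    apply ciSup_le
    intro a
    have h1 : (⨅ b, f a b) ≤ (⨅ b, g a b) + ε := by
      rw [← sub_le_iff_le_add]
      apply le_ciInf
      intro b
      rw [sub_le_iff_le_add]
      refine le_trans (ciInf_le (hbb f hfb a) b) ?_
      have := (abs_le.1 (hfg a b)).2
      linarith
    have h2 : (⨅ b, g a b) ≤ ⨆ a', ⨅ b, g a' b := le_ciSup (hba g hgb) a
    linarith
  have h1 := key f g hfb hgb hfg
  have h2 := key g f hgb hfb (fun a b => by rw [abs_sub_comm]; exact hfg a b)
  rw [abs_sub_le_iff]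
  constructor <;> linarith

lemma vstar_zero (p : X → U1 × U2 → X × (Z1 × Z2) → ℝ) (r : X → U1 × U2 → ℝ) (γ : ℝ)
    [Nonempty U1] [Nonempty U2] :
    ∀ (k τ : ℕ), vstar p r γ k τ (fun _ => (0:ℝ)) = 0
  | 0, τ => rfl
  | (k+1), τ => by
    have h : ∀ (a1 : DR1 U1 Z1 τ) (a2 : DR2 U2 Z2 τ),
        Rstage r τ (fun _ => (0:ℝ)) a1 a2 +
          γ * vstar p r γ k (τ+1) (Tstage p τ (fun _ => (0:ℝ)) a1 a2) = 0 := by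
      intro a1 a2
      have hR : Rstage r τ (fun _ => (0:ℝ)) a1 a2 = 0 := by simp [Rstage]
      have hT : Tstage p τ (fun _ => (0:ℝ)) a1 a2 = fun _ => 0 := by
        funext yo; simp [Tstage]
      rw [hR, hT, vstar_zero p r γ k (τ+1), mul_zero, add_zero]
    simp only [vstar, h, ciInf_const, ciSup_const]

lemma vstar_lip [Nonempty U1] [Nonempty U2]
    (p : X → U1 × U2 → X × (Z1 × Z2) → ℝ) (r : X → U1 × U2 → ℝ) (γ : ℝ)
    (hp : ∀ x u, IsDist (p x u)) (hγ0 : 0 ≤ γ)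
    {M : ℝ} (hM0 : 0 ≤ M) (hM : ∀ x u, |r x u| ≤ M) (k : ℕ) :
    ∃ κ : ℝ, 0 ≤ κ ∧ ∀ (τ : ℕ) (s s' : X × JHist U1 Z1 U2 Z2 τ → ℝ),
      |vstar p r γ k τ s - vstar p r γ k τ s'| ≤ κ * dist1 s s' := by
  induction k with
  | zero => exact ⟨0, le_rfl, fun τ s s' => by simp [vstar]⟩
  | succ k ih =>
    obtain ⟨κ, hκ0, hκ⟩ := ih
    refine ⟨M + γ * κ, by positivity, ?_⟩
    intro τ s s'
    have key : ∀ (t t' : X × JHist U1 Z1 U2 Z2 τ → ℝ) (a1 : DR1 U1 Z1 τ) (a2 : DR2 U2 Z2 τ),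
        |(Rstage r τ t a1 a2 + γ * vstar p r γ k (τ+1) (Tstage p τ t a1 a2)) -
         (Rstage r τ t' a1 a2 + γ * vstar p r γ k (τ+1) (Tstage p τ t' a1 a2))| ≤
        (M + γ * κ) * dist1 t t' := by
      intro t t' a1 a2
      have h1 := Rstage_lip r t t' a1 a2 hM
      have h2 := hκ (τ+1) (Tstage p τ t a1 a2) (Tstage p τ t' a1 a2)
      have h3 := Tstage_lip p hp t t' a1 a2
      have hd0 : 0 ≤ dist1 t t' := dist1_nonneg t t'
      calc |(Rstage r τ t a1 a2 + γ * vstar p r γ k (τ+1) (Tstage p τ t a1 a2)) -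
            (Rstage r τ t' a1 a2 + γ * vstar p r γ k (τ+1) (Tstage p τ t' a1 a2))|
          = |(Rstage r τ t a1 a2 - Rstage r τ t' a1 a2) +
             γ * (vstar p r γ k (τ+1) (Tstage p τ t a1 a2) -
                  vstar p r γ k (τ+1) (Tstage p τ t' a1 a2))| := by ring_nf
        _ ≤ |Rstage r τ t a1 a2 - Rstage r τ t' a1 a2| +
            |γ| * |vstar p r γ k (τ+1) (Tstage p τ t a1 a2) -
                   vstar p r γ k (τ+1) (Tstage p τ t' a1 a2)| := by
            rw [← abs_mul]; exact abs_add_le _ _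
        _ ≤ M * dist1 t t' + γ * (κ * dist1 t t') := by
            refine add_le_add h1 ?_
            rw [abs_of_nonneg hγ0]
            refine mul_le_mul_of_nonneg_left (le_trans h2 ?_) hγ0
            exact mul_le_mul_of_nonneg_left h3 hκ0
        _ = (M + γ * κ) * dist1 t t' := by ring
    have hzero : ∀ (a1 : DR1 U1 Z1 τ) (a2 : DR2 U2 Z2 τ),
        Rstage r τ (fun _ => (0:ℝ)) a1 a2 +
          γ * vstar p r γ k (τ+1) (Tstage p τ (fun _ => (0:ℝ)) a1 a2) = 0 := by
      intro a1 a2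
      have hR : Rstage r τ (fun _ => (0:ℝ)) a1 a2 = 0 := by simp [Rstage]
      have hT : Tstage p τ (fun _ => (0:ℝ)) a1 a2 = fun _ => 0 := by
        funext yo; simp [Tstage]
      rw [hR, hT, vstar_zero, mul_zero, add_zero]
    set B : ℝ := (M + γ * κ) * (dist1 s (fun _ => (0:ℝ)) + dist1 s' (fun _ => (0:ℝ))) with hB
    have hbd : ∀ (t : X × JHist U1 Z1 U2 Z2 τ → ℝ),
        dist1 t (fun _ => (0:ℝ)) ≤ dist1 s (fun _ => (0:ℝ)) + dist1 s' (fun _ => (0:ℝ)) →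
        ∀ (a1 : DR1 U1 Z1 τ) (a2 : DR2 U2 Z2 τ),
        |Rstage r τ t a1 a2 + γ * vstar p r γ k (τ+1) (Tstage p τ t a1 a2)| ≤ B := by
      intro t ht a1 a2
      have h := key t (fun _ => (0:ℝ)) a1 a2
      rw [hzero a1 a2, sub_zero] at h
      refine le_trans h ?_
      rw [hB]
      have : (0:ℝ) ≤ M + γ * κ := by positivity
      exact mul_le_mul_of_nonneg_left ht this
    have hbs : dist1 s (fun _ => (0:ℝ)) ≤ dist1 s (fun _ => (0:ℝ)) + dist1 s' (fun _ => (0:ℝ)) :=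
      le_add_of_nonneg_right (dist1_nonneg _ _)
    have hbs' : dist1 s' (fun _ => (0:ℝ)) ≤ dist1 s (fun _ => (0:ℝ)) + dist1 s' (fun _ => (0:ℝ)) :=
      le_add_of_nonneg_left (dist1_nonneg _ _)
    show |(⨆ a1 : DR1 U1 Z1 τ, ⨅ a2 : DR2 U2 Z2 τ,
            Rstage r τ s a1 a2 + γ * vstar p r γ k (τ+1) (Tstage p τ s a1 a2)) -
          (⨆ a1 : DR1 U1 Z1 τ, ⨅ a2 : DR2 U2 Z2 τ,
            Rstage r τ s' a1 a2 + γ * vstar p r γ k (τ+1) (Tstage p τ s' a1 a2))| ≤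
          (M + γ * κ) * dist1 s s'
    exact supinf_comp _ _ (hbd s hbs) (hbd s' hbs') (fun a1 a2 => key s s' a1 a2)


/-- adapted from Delage et al. 2023: for every stage `τ ∈ {0,…,ℓ}` of a
finite zs-POSG there is a constant `κ_τ ≥ 0` such that the optimal value function `v*_τ`
is `κ_τ`-Lipschitz over occupancy states w.r.t. the 1-norm. -/
theorem stmt1
    [Nonempty X] [Nonempty U1] [Nonempty U2] [Nonempty Z1] [Nonempty Z2]
    (p : X → U1 × U2 → X × (Z1 × Z2) → ℝ) (r : X → U1 × U2 → ℝ)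
    (s0 : X → ℝ) (γ : ℝ) (ℓ : ℕ)
    (hp : ∀ x u, IsDist (p x u)) (hs0 : IsDist s0) (hγ0 : 0 ≤ γ) (hγ1 : γ < 1)
    (τ : ℕ) (hτ : τ ≤ ℓ) :
    ∃ κ : ℝ, 0 ≤ κ ∧
      ∀ s s' : X × JHist U1 Z1 U2 Z2 τ → ℝ, IsDist s → IsDist s' →
        |vstar p r γ (ℓ - τ) τ s - vstar p r γ (ℓ - τ) τ s'| ≤ κ * dist1 s s' := by
  have hM : ∀ (x : X) (u : U1 × U2), |r x u| ≤ ∑ x' : X, ∑ u' : U1 × U2, |r x' u'| := by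
    intro x u
    have h1 : |r x u| ≤ ∑ u' : U1 × U2, |r x u'| :=
      Finset.single_le_sum (f := fun u' => |r x u'|) (fun u' _ => abs_nonneg _) (Finset.mem_univ u)
    have h2 : ∑ u' : U1 × U2, |r x u'| ≤ ∑ x' : X, ∑ u' : U1 × U2, |r x' u'| :=
      Finset.single_le_sum (f := fun x' => ∑ u' : U1 × U2, |r x' u'|)
        (fun x' _ => Finset.sum_nonneg fun _ _ => abs_nonneg _) (Finset.mem_univ x)
    exact h1.trans h2
  obtain ⟨κ, hκ0, hκ⟩ := vstar_lip p r γ hp hγ0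
    (M := ∑ x' : X, ∑ u' : U1 × U2, |r x' u'|)
    (Finset.sum_nonneg fun _ _ => Finset.sum_nonneg fun _ _ => abs_nonneg _) hM (ℓ - τ)
  exact ⟨κ, hκ0, fun s s' _ _ => hκ τ s s'⟩


end ZSPOSG
end

section
/- In a finite zs-POSG, the occupancy state is a sufficient statistic of the information state ι_τ = (s0, a_0, …, a_{τ−1}) for both immediate rewards and transitions: for every stage τ and joint decision rules a_0, …, a_τ, (i) the occupancy state s_{τ+1} induced by (s0, a_0, …, a_τ) satisfies s_{τ+1}(y, (o, u, z)) = a_τ(u | o) · Σ_{x ∈ X} s_τ(x, o) · p(y, z | x, u) for all y ∈ X, o ∈ O_τ, u ∈ U, z ∈ Z, i.e. s_{τ+1} = T(s_τ, a_τ), where s_τ is the occupancy state induced by (s0, a_0, …, a_{τ−1}); and (ii) the expected stage-τ reward satisfies E[r(x_τ, u_τ)] = R(s_τ, a_τ). -/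
open scoped BigOperators

section ZSPOSG

variable {X U1 U2 Z1 Z2 : Type}
variable [Fintype X] [Fintype U1] [Fintype U2] [Fintype Z1] [Fintype Z2]

variable [DecidableEq X] [DecidableEq U1] [DecidableEq U2] [DecidableEq Z1] [DecidableEq Z2]

/- ### Auxiliary lemmas -/

lemma sum_fun_snoc {α β : Type} [Fintype α] [AddCommMonoid β] {n : ℕ}
    (G : (Fin (n + 1) → α) → β) :
    ∑ f : Fin (n + 1) → α, G f = ∑ g : Fin n → α, ∑ a : α, G (Fin.snoc g a) := by
  rw [← Equiv.sum_comp ((Equiv.prodComm (Fin n → α) α).trans (Fin.snocEquiv (fun _ => α))) G,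
    Fintype.sum_prod_type]
  rfl

lemma snoc_eq_snoc_iff {α : Type} {n : ℕ} {g g' : Fin n → α} {x x' : α} :
    (Fin.snoc g x : Fin (n+1) → α) = Fin.snoc g' x' ↔ g = g' ∧ x = x' := by
  constructor
  · intro h
    have h1 := congrArg Fin.init h
    rw [Fin.init_snoc, Fin.init_snoc] at h1
    have h2 := congrFun h (Fin.last n)
    rw [Fin.snoc_last, Fin.snoc_last] at h2
    exact ⟨h1, h2⟩
  · rintro ⟨rfl, rfl⟩; rfl

lemma histUpTo_snoc {τ : ℕ} (mv : Fin τ → (U1 × Z1) × (U2 × Z2))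
    (m : (U1 × Z1) × (U2 × Z2)) {t : ℕ} (ht : t ≤ τ) (ht' : t ≤ τ + 1) :
    histUpTo (τ + 1) (Fin.snoc mv m) t ht' = histUpTo τ mv t ht := by
  unfold histUpTo
  have key : ∀ i : Fin t, (Fin.snoc mv m : Fin (τ+1) → _) (Fin.castLE ht' i)
      = mv (Fin.castLE ht i) := by
    intro i
    have h : (Fin.castLE ht' i) = Fin.castSucc (Fin.castLE ht i) := rfl
    rw [h, Fin.snoc_castSucc]
  refine Prod.ext ?_ ?_ <;> funext i <;> simp [key i]

lemma histUpTo_snoc' {τ : ℕ} (mv : Fin τ → (U1 × Z1) × (U2 × Z2))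
    (m : (U1 × Z1) × (U2 × Z2)) (t : Fin τ) (ht' : t.1 ≤ τ + 1) :
    histUpTo (τ + 1) (Fin.snoc mv m) t.1 ht' = histUpTo τ mv t.1 t.isLt.le :=
  histUpTo_snoc mv m _ _

lemma histUpTo_snoc_top {τ : ℕ} (mv : Fin τ → (U1 × Z1) × (U2 × Z2))
    (m : (U1 × Z1) × (U2 × Z2)) (ht' : τ + 1 ≤ τ + 1) :
    histUpTo (τ + 1) (Fin.snoc mv m) (τ + 1) ht' =
      (Fin.snoc (histUpTo τ mv τ le_rfl).1 m.1, Fin.snoc (histUpTo τ mv τ le_rfl).2 m.2) := by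
  unfold histUpTo
  refine Prod.ext ?_ ?_ <;> funext i <;>
    induction i using Fin.lastCases with
    | last =>
        have h : (Fin.castLE ht' (Fin.last τ)) = Fin.last τ := rfl
        simp [h]
    | cast j =>
        have h : (Fin.castLE ht' (Fin.castSucc j)) = Fin.castSucc (Fin.castLE (le_refl τ) j) :=
          rfl
        have h2 : (Fin.castLE (le_refl τ) j) = j := rfl
        simp [h, h2]

lemma trajProb_snoc (p : X → U1 × U2 → X × (Z1 × Z2) → ℝ) (s0 : X → ℝ)
    (pol1 : (t : ℕ) → DR1 U1 Z1 t) (pol2 : (t : ℕ) → DR2 U2 Z2 t) (τ : ℕ)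
    (xs : Fin (τ + 1) → X) (y : X) (mv : Fin τ → (U1 × Z1) × (U2 × Z2))
    (m : (U1 × Z1) × (U2 × Z2)) :
    trajProb p s0 pol1 pol2 (τ + 1) (Fin.snoc xs y, Fin.snoc mv m) =
      trajProb p s0 pol1 pol2 τ (xs, mv) *
        ((pol1 τ).1 (histUpTo τ mv τ le_rfl).1 m.1.1 *
         (pol2 τ).1 (histUpTo τ mv τ le_rfl).2 m.2.1 *
         p (xs (Fin.last τ)) (m.1.1, m.2.1) (y, (m.1.2, m.2.2))) := by
  unfold trajProb
  rw [Fin.prod_univ_castSucc]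
  have h0 : (Fin.snoc xs y : Fin (τ+2) → X) 0 = xs 0 := by
    have : (0 : Fin (τ+2)) = Fin.castSucc 0 := rfl
    rw [this, Fin.snoc_castSucc]
  have hlastm : (Fin.snoc mv m : Fin (τ+1) → _) (Fin.last τ) = m := Fin.snoc_last _ _
  have hlastx : (Fin.snoc xs y : Fin (τ+2) → X) ((Fin.last τ).castSucc) = xs (Fin.last τ) :=
    Fin.snoc_castSucc _ _ _
  have hlasty : (Fin.snoc xs y : Fin (τ+2) → X) ((Fin.last τ).succ) = y := by
    have : (Fin.last τ).succ = Fin.last (τ+1) := rfl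
    rw [this, Fin.snoc_last]
  have hhistlast : ∀ h' : τ ≤ τ + 1, histUpTo (τ+1) (Fin.snoc mv m) τ h'
      = histUpTo τ mv τ le_rfl := fun h' => histUpTo_snoc mv m le_rfl h'
  have hprod : ∀ t : Fin τ,
      ((fun t : Fin (τ+1) =>
        (pol1 t.1).1 (histUpTo (τ+1) (Fin.snoc mv m) t.1 t.isLt.le).1
          (((Fin.snoc mv m : Fin (τ+1) → _) t).1.1) *
        (pol2 t.1).1 (histUpTo (τ+1) (Fin.snoc mv m) t.1 t.isLt.le).2
          (((Fin.snoc mv m : Fin (τ+1) → _) t).2.1) *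
        p ((Fin.snoc xs y : Fin (τ+2) → X) t.castSucc)
          ((((Fin.snoc mv m : Fin (τ+1) → _) t).1.1),
            (((Fin.snoc mv m : Fin (τ+1) → _) t).2.1))
          ((Fin.snoc xs y : Fin (τ+2) → X) t.succ,
            ((((Fin.snoc mv m : Fin (τ+1) → _) t).1.2),
              (((Fin.snoc mv m : Fin (τ+1) → _) t).2.2)))) (Fin.castSucc t)) =
      ((pol1 t.1).1 (histUpTo τ mv t.1 t.isLt.le).1 ((mv t).1.1) *
        (pol2 t.1).1 (histUpTo τ mv t.1 t.isLt.le).2 ((mv t).2.1) *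
        p (xs t.castSucc) ((mv t).1.1, (mv t).2.1)
          (xs t.succ, ((mv t).1.2, (mv t).2.2))) := by
    intro t
    have e1 : (Fin.snoc mv m : Fin (τ+1) → _) t.castSucc = mv t := Fin.snoc_castSucc _ _ _
    have e2 : ∀ h' : t.1 ≤ τ + 1, histUpTo (τ+1) (Fin.snoc mv m) t.1 h'
        = histUpTo τ mv t.1 t.isLt.le := fun h' => histUpTo_snoc mv m t.isLt.le h'
    have e3 : (Fin.snoc xs y : Fin (τ+2) → X) (t.castSucc).castSucc = xs t.castSucc :=
      Fin.snoc_castSucc _ _ _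
    have e4 : (Fin.snoc xs y : Fin (τ+2) → X) (t.castSucc).succ = xs t.succ := by
      have : ((t.castSucc).succ : Fin (τ+2)) = Fin.castSucc (t.succ) := rfl
      rw [this, Fin.snoc_castSucc]
    simp only [e1, e3, e4, Fin.coe_castSucc, e2]
  rw [Finset.prod_congr rfl (fun t _ => hprod t)]
  simp only [Fin.val_last]
  simp only [hhistlast, hlastm, hlastx, hlasty, h0]
  ring

lemma occ_sum (p : X → U1 × U2 → X × (Z1 × Z2) → ℝ) (s0 : X → ℝ)
    (pol1 : (t : ℕ) → DR1 U1 Z1 t) (pol2 : (t : ℕ) → DR2 U2 Z2 t) (τ : ℕ)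
    (f : X × JHist U1 Z1 U2 Z2 τ → ℝ) :
    ∑ xo : X × JHist U1 Z1 U2 Z2 τ, occInduced p s0 pol1 pol2 τ xo * f xo =
      ∑ w : Traj X U1 Z1 U2 Z2 τ, trajProb p s0 pol1 pol2 τ w *
        f (w.1 (Fin.last τ), histUpTo τ w.2 τ le_rfl) := by
  unfold occInduced
  simp only [Finset.sum_mul]
  rw [Finset.sum_comm]
  refine Finset.sum_congr rfl fun w _ => ?_
  calc ∑ xo : X × JHist U1 Z1 U2 Z2 τ,
        (if w.1 (Fin.last τ) = xo.1 ∧ histUpTo τ w.2 τ le_rfl = xo.2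
          then trajProb p s0 pol1 pol2 τ w else 0) * f xo
      = ∑ xo : X × JHist U1 Z1 U2 Z2 τ,
          (if xo = (w.1 (Fin.last τ), histUpTo τ w.2 τ le_rfl)
            then trajProb p s0 pol1 pol2 τ w *
              f (w.1 (Fin.last τ), histUpTo τ w.2 τ le_rfl) else 0) := by
        refine Finset.sum_congr rfl fun xo _ => ?_
        by_cases h : xo = (w.1 (Fin.last τ), histUpTo τ w.2 τ le_rfl)
        · subst h; simp
        · rw [if_neg h, if_neg, zero_mul]
          intro hc
          exact h (Prod.ext hc.1.symm hc.2.symm)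
    _ = trajProb p s0 pol1 pol2 τ w *
          f (w.1 (Fin.last τ), histUpTo τ w.2 τ le_rfl) := by
        simp [Finset.sum_ite_eq']

lemma sum_traj_snoc {τ : ℕ} (F : Traj X U1 Z1 U2 Z2 (τ + 1) → ℝ) :
    ∑ w : Traj X U1 Z1 U2 Z2 (τ + 1), F w =
      ∑ w : Traj X U1 Z1 U2 Z2 τ, ∑ y : X, ∑ m : (U1 × Z1) × (U2 × Z2),
        F (Fin.snoc w.1 y, Fin.snoc w.2 m) := by
  calc ∑ w : Traj X U1 Z1 U2 Z2 (τ + 1), F w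
      = ∑ xs : Fin (τ + 2) → X, ∑ mv : Fin (τ + 1) → (U1 × Z1) × (U2 × Z2),
          F (xs, mv) := Fintype.sum_prod_type _
    _ = ∑ xs : Fin (τ + 1) → X, ∑ y : X,
          ∑ mv : Fin (τ + 1) → (U1 × Z1) × (U2 × Z2), F (Fin.snoc xs y, mv) :=
        sum_fun_snoc _
    _ = ∑ xs : Fin (τ + 1) → X, ∑ y : X, ∑ mv : Fin τ → (U1 × Z1) × (U2 × Z2),
          ∑ m : (U1 × Z1) × (U2 × Z2), F (Fin.snoc xs y, Fin.snoc mv m) :=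
        Finset.sum_congr rfl fun xs _ => Finset.sum_congr rfl fun y _ => sum_fun_snoc _
    _ = ∑ xs : Fin (τ + 1) → X, ∑ mv : Fin τ → (U1 × Z1) × (U2 × Z2), ∑ y : X,
          ∑ m : (U1 × Z1) × (U2 × Z2), F (Fin.snoc xs y, Fin.snoc mv m) :=
        Finset.sum_congr rfl fun xs _ => Finset.sum_comm
    _ = ∑ w : Traj X U1 Z1 U2 Z2 τ, ∑ y : X, ∑ m : (U1 × Z1) × (U2 × Z2),
          F (Fin.snoc w.1 y, Fin.snoc w.2 m) := by
        rw [Fintype.sum_prod_type]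

lemma occ_succ' (p : X → U1 × U2 → X × (Z1 × Z2) → ℝ) (s0 : X → ℝ)
    (pol1 : (t : ℕ) → DR1 U1 Z1 t) (pol2 : (t : ℕ) → DR2 U2 Z2 t) (τ : ℕ)
    (y : X) (o1 : Hist1 U1 Z1 τ) (o2 : Hist2 U2 Z2 τ)
    (u1 : U1) (u2 : U2) (z1 : Z1) (z2 : Z2) :
    occInduced p s0 pol1 pol2 (τ + 1)
        (y, (Fin.snoc o1 (u1, z1), Fin.snoc o2 (u2, z2))) =
      (pol1 τ).1 o1 u1 * (pol2 τ).1 o2 u2 *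
        ∑ x : X, occInduced p s0 pol1 pol2 τ (x, (o1, o2)) * p x (u1, u2) (y, (z1, z2)) := by
  have hmid : occInduced p s0 pol1 pol2 (τ + 1)
        (y, (Fin.snoc o1 (u1, z1), Fin.snoc o2 (u2, z2)))
      = ∑ w : Traj X U1 Z1 U2 Z2 τ,
          (if histUpTo τ w.2 τ le_rfl = (o1, o2) then
            trajProb p s0 pol1 pol2 τ w *
              ((pol1 τ).1 o1 u1 * (pol2 τ).1 o2 u2 *
                p (w.1 (Fin.last τ)) (u1, u2) (y, (z1, z2)))
          else 0) := by
    unfold occInduced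
    rw [sum_traj_snoc]
    refine Finset.sum_congr rfl fun w _ => ?_
    have hcond : ∀ (y' : X) (m : (U1 × Z1) × (U2 × Z2)),
        ((Fin.snoc w.1 y' : Fin (τ + 2) → X) (Fin.last (τ + 1)) = y ∧
          histUpTo (τ + 1) (Fin.snoc w.2 m) (τ + 1) le_rfl =
            (Fin.snoc o1 (u1, z1), Fin.snoc o2 (u2, z2)))
        ↔ (y' = y ∧ (m = ((u1, z1), (u2, z2)) ∧ histUpTo τ w.2 τ le_rfl = (o1, o2))) := by
      intro y' m
      rw [Fin.snoc_last, histUpTo_snoc_top]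
      constructor
      · rintro ⟨hy, h2⟩
        have ha := snoc_eq_snoc_iff.mp (congrArg Prod.fst h2)
        have hb := snoc_eq_snoc_iff.mp (congrArg Prod.snd h2)
        exact ⟨hy, Prod.ext ha.2 hb.2, Prod.ext ha.1 hb.1⟩
      · rintro ⟨rfl, rfl, hh⟩
        refine ⟨rfl, ?_⟩
        rw [hh]
    have hrw : ∀ (y' : X) (m : (U1 × Z1) × (U2 × Z2)),
        (if ((Fin.snoc w.1 y' : Fin (τ + 2) → X) (Fin.last (τ + 1)) = y ∧
            histUpTo (τ + 1) (Fin.snoc w.2 m) (τ + 1) le_rfl =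
              (Fin.snoc o1 (u1, z1), Fin.snoc o2 (u2, z2)))
          then trajProb p s0 pol1 pol2 (τ + 1) (Fin.snoc w.1 y', Fin.snoc w.2 m) else 0)
        = (if (y' = y ∧ (m = ((u1, z1), (u2, z2)) ∧ histUpTo τ w.2 τ le_rfl = (o1, o2)))
            then trajProb p s0 pol1 pol2 (τ + 1) (Fin.snoc w.1 y', Fin.snoc w.2 m) else 0) :=
      fun y' m => if_congr (hcond y' m) rfl rfl
    calc ∑ y' : X, ∑ m : (U1 × Z1) × (U2 × Z2),
          (if ((Fin.snoc w.1 y' : Fin (τ + 2) → X) (Fin.last (τ + 1)) = y ∧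
              histUpTo (τ + 1) (Fin.snoc w.2 m) (τ + 1) le_rfl =
                (Fin.snoc o1 (u1, z1), Fin.snoc o2 (u2, z2)))
            then trajProb p s0 pol1 pol2 (τ + 1) (Fin.snoc w.1 y', Fin.snoc w.2 m) else 0)
        = ∑ y' : X, ∑ m : (U1 × Z1) × (U2 × Z2),
            (if (y' = y ∧ (m = ((u1, z1), (u2, z2)) ∧ histUpTo τ w.2 τ le_rfl = (o1, o2)))
              then trajProb p s0 pol1 pol2 (τ + 1) (Fin.snoc w.1 y', Fin.snoc w.2 m) else 0) :=
          Finset.sum_congr rfl fun y' _ => Finset.sum_congr rfl fun m _ => hrw y' m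
      _ = (if histUpTo τ w.2 τ le_rfl = (o1, o2) then
            trajProb p s0 pol1 pol2 (τ + 1)
              (Fin.snoc w.1 y, Fin.snoc w.2 ((u1, z1), (u2, z2))) else 0) := by
          by_cases hh : histUpTo τ w.2 τ le_rfl = (o1, o2) <;>
            simp [hh, ite_and, Finset.sum_ite_eq']
      _ = (if histUpTo τ w.2 τ le_rfl = (o1, o2) then
            trajProb p s0 pol1 pol2 τ w *
              ((pol1 τ).1 o1 u1 * (pol2 τ).1 o2 u2 *
                p (w.1 (Fin.last τ)) (u1, u2) (y, (z1, z2))) else 0) := by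
          by_cases hh : histUpTo τ w.2 τ le_rfl = (o1, o2)
          · rw [if_pos hh, if_pos hh, trajProb_snoc, hh]
          · rw [if_neg hh, if_neg hh]
  have hRHS : ∑ x : X, occInduced p s0 pol1 pol2 τ (x, (o1, o2)) * p x (u1, u2) (y, (z1, z2))
      = ∑ w : Traj X U1 Z1 U2 Z2 τ, trajProb p s0 pol1 pol2 τ w *
          (if histUpTo τ w.2 τ le_rfl = (o1, o2)
            then p (w.1 (Fin.last τ)) (u1, u2) (y, (z1, z2)) else 0) := by
    rw [← occ_sum p s0 pol1 pol2 τ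
      (fun xo => if xo.2 = (o1, o2) then p xo.1 (u1, u2) (y, (z1, z2)) else 0)]
    rw [Fintype.sum_prod_type]
    refine (Finset.sum_congr rfl fun x _ => ?_).symm
    simp [mul_ite, Finset.sum_ite_eq']
  rw [hmid, hRHS, Finset.mul_sum]
  refine Finset.sum_congr rfl fun w _ => ?_
  by_cases hh : histUpTo τ w.2 τ le_rfl = (o1, o2) <;> simp [hh] <;> ring

lemma reward_suff (p : X → U1 × U2 → X × (Z1 × Z2) → ℝ) (r : X → U1 × U2 → ℝ)
    (s0 : X → ℝ) (hp : ∀ x u, IsDist (p x u))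
    (pol1 : (t : ℕ) → DR1 U1 Z1 t) (pol2 : (t : ℕ) → DR2 U2 Z2 t) (τ : ℕ) :
    (∑ w : Traj X U1 Z1 U2 Z2 (τ + 1), trajProb p s0 pol1 pol2 (τ + 1) w *
        r (w.1 (Fin.castSucc (Fin.last τ)))
          ((w.2 (Fin.last τ)).1.1, (w.2 (Fin.last τ)).2.1)) =
      Rstage r τ (occInduced p s0 pol1 pol2 τ) (pol1 τ) (pol2 τ) := by
  have hp1 : ∀ (x : X) (u : U1 × U2),
      ∑ zz : Z1 × Z2, ∑ y : X, p x u (y, zz) = 1 := by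
    intro x u
    rw [Finset.sum_comm, ← Fintype.sum_prod_type]
    exact (hp x u).2
  have key : ∀ (x : X) (h1 : Hist1 U1 Z1 τ) (h2 : Hist2 U2 Z2 τ) (c : ℝ),
      (∑ y : X, ∑ m : (U1 × Z1) × (U2 × Z2),
        c * ((pol1 τ).1 h1 m.1.1 * (pol2 τ).1 h2 m.2.1 *
              p x (m.1.1, m.2.1) (y, (m.1.2, m.2.2))) *
          r x (m.1.1, m.2.1))
      = c * ∑ u : U1 × U2, (pol1 τ).1 h1 u.1 * (pol2 τ).1 h2 u.2 * r x u := by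
    intro x h1 h2 c
    rw [Finset.sum_comm]
    calc ∑ m : (U1 × Z1) × (U2 × Z2), ∑ y : X,
          c * ((pol1 τ).1 h1 m.1.1 * (pol2 τ).1 h2 m.2.1 *
            p x (m.1.1, m.2.1) (y, (m.1.2, m.2.2))) * r x (m.1.1, m.2.1)
        = ∑ q : (U1 × U2) × (Z1 × Z2), ∑ y : X,
            c * ((pol1 τ).1 h1 q.1.1 * (pol2 τ).1 h2 q.1.2 *
              p x q.1 (y, q.2)) * r x q.1 := by
          rw [← Equiv.sum_comp (Equiv.prodProdProdComm U1 Z1 U2 Z2).symm]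
          refine Finset.sum_congr rfl fun q _ => ?_
          simp [Equiv.prodProdProdComm]
      _ = ∑ q : (U1 × U2) × (Z1 × Z2),
            c * ((pol1 τ).1 h1 q.1.1 * (pol2 τ).1 h2 q.1.2 * r x q.1) *
              ∑ y : X, p x q.1 (y, q.2) := by
          refine Finset.sum_congr rfl fun q _ => ?_
          rw [Finset.mul_sum]
          exact Finset.sum_congr rfl fun y _ => by ring
      _ = ∑ u : U1 × U2, ∑ zz : Z1 × Z2,
            c * ((pol1 τ).1 h1 u.1 * (pol2 τ).1 h2 u.2 * r x u) *
              ∑ y : X, p x u (y, zz) := Fintype.sum_prod_type _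
      _ = ∑ u : U1 × U2,
            c * ((pol1 τ).1 h1 u.1 * (pol2 τ).1 h2 u.2 * r x u) *
              ∑ zz : Z1 × Z2, ∑ y : X, p x u (y, zz) := by
          refine Finset.sum_congr rfl fun u _ => ?_
          rw [Finset.mul_sum]
      _ = c * ∑ u : U1 × U2, (pol1 τ).1 h1 u.1 * (pol2 τ).1 h2 u.2 * r x u := by
          rw [Finset.mul_sum]
          refine Finset.sum_congr rfl fun u _ => ?_
          rw [hp1 x u]
          ring
  rw [sum_traj_snoc]
  calc ∑ w : Traj X U1 Z1 U2 Z2 τ, ∑ y : X, ∑ m : (U1 × Z1) × (U2 × Z2),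
        trajProb p s0 pol1 pol2 (τ + 1) (Fin.snoc w.1 y, Fin.snoc w.2 m) *
          r ((Fin.snoc w.1 y : Fin (τ + 2) → X) (Fin.castSucc (Fin.last τ)))
            (((Fin.snoc w.2 m : Fin (τ + 1) → _) (Fin.last τ)).1.1,
             ((Fin.snoc w.2 m : Fin (τ + 1) → _) (Fin.last τ)).2.1)
      = ∑ w : Traj X U1 Z1 U2 Z2 τ, ∑ y : X, ∑ m : (U1 × Z1) × (U2 × Z2),
          trajProb p s0 pol1 pol2 τ w *
            ((pol1 τ).1 (histUpTo τ w.2 τ le_rfl).1 m.1.1 *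
             (pol2 τ).1 (histUpTo τ w.2 τ le_rfl).2 m.2.1 *
             p (w.1 (Fin.last τ)) (m.1.1, m.2.1) (y, (m.1.2, m.2.2))) *
            r (w.1 (Fin.last τ)) (m.1.1, m.2.1) := by
        refine Finset.sum_congr rfl fun w _ => Finset.sum_congr rfl fun y _ =>
          Finset.sum_congr rfl fun m _ => ?_
        rw [trajProb_snoc, Fin.snoc_castSucc, Fin.snoc_last]
    _ = ∑ w : Traj X U1 Z1 U2 Z2 τ, trajProb p s0 pol1 pol2 τ w *
          ∑ u : U1 × U2, (pol1 τ).1 (histUpTo τ w.2 τ le_rfl).1 u.1 *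
            (pol2 τ).1 (histUpTo τ w.2 τ le_rfl).2 u.2 * r (w.1 (Fin.last τ)) u :=
        Finset.sum_congr rfl fun w _ =>
          key (w.1 (Fin.last τ)) (histUpTo τ w.2 τ le_rfl).1 (histUpTo τ w.2 τ le_rfl).2
            (trajProb p s0 pol1 pol2 τ w)
    _ = Rstage r τ (occInduced p s0 pol1 pol2 τ) (pol1 τ) (pol2 τ) := by
        rw [Rstage, occ_sum p s0 pol1 pol2 τ
          (fun xo => ∑ u : U1 × U2, (pol1 τ).1 xo.2.1 u.1 * (pol2 τ).1 xo.2.2 u.2 * r xo.1 u)]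


/-- the occupancy state is a sufficient statistic of the information
state for rewards and transitions: (i) the occupancy state induced by
`(s0, a_0, …, a_τ)` satisfies
`s_{τ+1}(y,(o,u,z)) = a_τ(u|o) Σ_x s_τ(x,o) p(y,z|x,u)`, i.e. `s_{τ+1} = T(s_τ, a_τ)`;
and (ii) the expected stage-`τ` reward satisfies `E[r(x_τ, u_τ)] = R(s_τ, a_τ)`. -/
theorem stmt6
    [Nonempty X] [Nonempty U1] [Nonempty U2] [Nonempty Z1] [Nonempty Z2]
    (p : X → U1 × U2 → X × (Z1 × Z2) → ℝ) (r : X → U1 × U2 → ℝ)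
    (s0 : X → ℝ) (γ : ℝ) (ℓ : ℕ)
    (hp : ∀ x u, IsDist (p x u)) (hs0 : IsDist s0) (hγ0 : 0 ≤ γ) (hγ1 : γ < 1)
    (pol1 : (t : ℕ) → DR1 U1 Z1 t) (pol2 : (t : ℕ) → DR2 U2 Z2 t) (τ : ℕ) :
    (∀ (y : X) (o : JHist U1 Z1 U2 Z2 τ) (u : U1 × U2) (z : Z1 × Z2),
        occInduced p s0 pol1 pol2 (τ + 1)
            (y, (Fin.snoc o.1 (u.1, z.1), Fin.snoc o.2 (u.2, z.2))) =
          (pol1 τ).1 o.1 u.1 * (pol2 τ).1 o.2 u.2 *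
            ∑ x : X, occInduced p s0 pol1 pol2 τ (x, o) * p x u (y, z)) ∧
      occInduced p s0 pol1 pol2 (τ + 1) =
        Tstage p τ (occInduced p s0 pol1 pol2 τ) (pol1 τ) (pol2 τ) ∧
      (∑ w : Traj X U1 Z1 U2 Z2 (τ + 1), trajProb p s0 pol1 pol2 (τ + 1) w *
          r (w.1 (Fin.castSucc (Fin.last τ)))
            ((w.2 (Fin.last τ)).1.1, (w.2 (Fin.last τ)).2.1)) =
        Rstage r τ (occInduced p s0 pol1 pol2 τ) (pol1 τ) (pol2 τ) := by
  refine ⟨fun y o u z => occ_succ' p s0 pol1 pol2 τ y o.1 o.2 u.1 u.2 z.1 z.2, ?_,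
    reward_suff p r s0 hp pol1 pol2 τ⟩
  funext yo
  obtain ⟨y, o1', o2'⟩ := yo
  have h := occ_succ' p s0 pol1 pol2 τ y (Fin.init o1') (Fin.init o2')
    (o1' (Fin.last τ)).1 (o2' (Fin.last τ)).1 (o1' (Fin.last τ)).2 (o2' (Fin.last τ)).2
  calc occInduced p s0 pol1 pol2 (τ + 1) (y, (o1', o2'))
      = occInduced p s0 pol1 pol2 (τ + 1)
          (y, (Fin.snoc (Fin.init o1') ((o1' (Fin.last τ)).1, (o1' (Fin.last τ)).2),
               Fin.snoc (Fin.init o2') ((o2' (Fin.last τ)).1, (o2' (Fin.last τ)).2))) := by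
        rw [show ((o1' (Fin.last τ)).1, (o1' (Fin.last τ)).2) = o1' (Fin.last τ) from rfl,
            show ((o2' (Fin.last τ)).1, (o2' (Fin.last τ)).2) = o2' (Fin.last τ) from rfl,
            Fin.snoc_init_self, Fin.snoc_init_self]
    _ = Tstage p τ (occInduced p s0 pol1 pol2 τ) (pol1 τ) (pol2 τ) (y, (o1', o2')) :=
        h.trans rfl

end ZSPOSG
end

section
/- In a finite zs-POSG, for any stage τ and any fixed player-1 continuation policy a¹_{τ:} = (a¹_τ, …, a¹_{ℓ−1}), define the best-response value v^{a¹}_τ(s_τ) = min over player-2 continuation policies a²_{τ:} of Σ_{x,o} s_τ(x, o) · α^{(a¹_{τ:}, a²_{τ:})}_τ(x, o). Then: (i) there exists a finite collection V of linear functions α : ℝ^{X × O¹_τ} → ℝ such that for every occupancy state s_τ with player-2 marginal s^m_τ and conditional occupancy states s^{c,o²}_τ, v^{a¹}_τ(s_τ) = Σ_{o² : s^m_τ(o²) > 0} s^m_τ(o²) · min_{α ∈ V} α(s^{c,o²}_τ); and (ii) this quantity lower-bounds the optimal value function: v^{a¹}_τ(s_τ) ≤ v*_τ(s_τ) for every occupancy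 state s_τ. -/
open scoped BigOperators

section ZSPOSG

variable {X U1 U2 Z1 Z2 : Type}
variable [Fintype X] [Fintype U1] [Fintype U2] [Fintype Z1] [Fintype Z2]

variable [DecidableEq X] [DecidableEq U1] [DecidableEq U2] [DecidableEq Z1] [DecidableEq Z2]

section Aux

open Finset

variable {X U1 U2 Z1 Z2 : Type}
variable [Fintype X] [Fintype U1] [Fintype U2] [Fintype Z1] [Fintype Z2]

lemma isDist_unif {α : Type} [Fintype α] [Nonempty α] :
    IsDist (fun _ : α => (Fintype.card α : ℝ)⁻¹) := by
  refine ⟨fun a => by positivity, ?_⟩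
  rw [Finset.sum_const, nsmul_eq_mul, Finset.card_univ,
    mul_inv_cancel₀ (by exact_mod_cast Fintype.card_ne_zero)]

noncomputable instance nonemptyDR1 [Nonempty U1] (τ : ℕ) : Nonempty (DR1 U1 Z1 τ) :=
  ⟨⟨fun _ _ => (Fintype.card U1 : ℝ)⁻¹, fun _ => isDist_unif⟩⟩

noncomputable instance nonemptyDR2 [Nonempty U2] (τ : ℕ) : Nonempty (DR2 U2 Z2 τ) :=
  ⟨⟨fun _ _ => (Fintype.card U2 : ℝ)⁻¹, fun _ => isDist_unif⟩⟩

lemma fun_snoc_castSucc {β : Type} {n : ℕ} (o : Fin n → β) (a : β) :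
    (fun i : Fin n => (Fin.snoc o a : Fin (n+1) → β) i.castSucc) = o :=
  funext fun i => Fin.snoc_castSucc ..

lemma sum_fn_succ {β M : Type} [Fintype β] [AddCommMonoid M] {n : ℕ}
    (f : (Fin (n+1) → β) → M) :
    ∑ h : Fin (n+1) → β, f h = ∑ o : Fin n → β, ∑ a : β, f (Fin.snoc o a) := by
  rw [← (Fin.snocEquiv (fun _ => β)).sum_comp f, Fintype.sum_prod_type]
  exact Finset.sum_comm

lemma sum_dist_mul_le {α : Type} [Fintype α] {w f : α → ℝ} (hw : IsDist w)
    {c : ℝ} (h : ∀ a, c ≤ f a) : c ≤ ∑ a, w a * f a := by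
  calc c = ∑ a, w a * c := by
        rw [← Finset.sum_mul, hw.2, one_mul]
    _ ≤ ∑ a, w a * f a :=
        Finset.sum_le_sum fun a _ => mul_le_mul_of_nonneg_left (h a) (hw.1 a)

end Aux
section Aux2

open Finset

variable {X U1 U2 Z1 Z2 : Type}
variable [Fintype X] [Fintype U1] [Fintype U2] [Fintype Z1] [Fintype Z2]

lemma sum_weight_abs_le {ι : Type} [Fintype ι] {w f : ι → ℝ} (hw0 : ∀ i, 0 ≤ w i)
    (hw1 : ∑ i, w i = 1) {C : ℝ} (hf : ∀ i, |f i| ≤ C) : |∑ i, w i * f i| ≤ C := by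
  calc |∑ i, w i * f i| ≤ ∑ i, |w i * f i| := Finset.abs_sum_le_sum_abs _ _
    _ ≤ ∑ i, w i * C := Finset.sum_le_sum fun i _ => by
        rw [abs_mul, abs_of_nonneg (hw0 i)]
        exact mul_le_mul_of_nonneg_left (hf i) (hw0 i)
    _ = C := by rw [← Finset.sum_mul, hw1, one_mul]

lemma sum_prod_dist {f : U1 → ℝ} {g : U2 → ℝ} (hf : ∑ u, f u = 1) (hg : ∑ u, g u = 1) :
    ∑ u : U1 × U2, f u.1 * g u.2 = 1 := by
  rw [Fintype.sum_prod_type]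
  simp_rw [← Finset.mul_sum, hg, mul_one]
  exact hf

variable (p : X → U1 × U2 → X × (Z1 × Z2) → ℝ) (r : X → U1 × U2 → ℝ) (γ : ℝ)
variable (cont1 : (t : ℕ) → DR1 U1 Z1 t)

/-- One-step construction of an α-vector from a player-2 control and a family of
next-stage α-vectors, one per player-2 observation. -/
noncomputable def buildAV (τ : ℕ) (u2 : U2)
    (g : Z2 → (X × Hist1 U1 Z1 (τ+1) → ℝ)) : X × Hist1 U1 Z1 τ → ℝ :=
  fun y => ∑ u1 : U1, (cont1 τ).1 y.2 u1 *
    (r y.1 (u1, u2) + γ * ∑ yz : X × (Z1 × Z2), p y.1 (u1, u2) yz *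
      g yz.2.2 (yz.1, Fin.snoc y.2 (u1, yz.2.1)))

open Classical in
/-- The finite collections of α-vectors. -/
noncomputable def AV : (k : ℕ) → (τ : ℕ) → Finset (X × Hist1 U1 Z1 τ → ℝ)
  | 0, _ => {0}
  | k+1, τ => Finset.univ.biUnion fun u2 : U2 =>
      (Fintype.piFinset fun _ : Z2 => AV k (τ+1)).image (buildAV p r γ cont1 τ u2)

lemma mem_AV_succ {k τ : ℕ} {β : X × Hist1 U1 Z1 τ → ℝ} :
    β ∈ AV p r γ cont1 (k+1) τ ↔ ∃ u2 g, (∀ z2, g z2 ∈ AV p r γ cont1 k (τ+1)) ∧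
      β = buildAV p r γ cont1 τ u2 g := by
  classical
  simp only [AV, Finset.mem_biUnion, Finset.mem_univ, true_and, Finset.mem_image,
    Fintype.mem_piFinset]
  constructor
  · rintro ⟨u2, g, hg, rfl⟩; exact ⟨u2, g, hg, rfl⟩
  · rintro ⟨u2, g, hg, rfl⟩; exact ⟨u2, g, hg, rfl⟩

lemma AV_nonempty [Nonempty U2] : ∀ k τ : ℕ, (AV p r γ cont1 k τ).Nonempty
  | 0, τ => ⟨0, by simp [AV]⟩
  | k+1, τ => by
    obtain ⟨β, hβ⟩ := AV_nonempty k (τ+1)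
    exact ⟨buildAV p r γ cont1 τ (Classical.arbitrary U2) (fun _ => β),
      (mem_AV_succ p r γ cont1).2 ⟨_, _, fun _ => hβ, rfl⟩⟩

lemma alphaRec_congr (pol2 pol2' : (t : ℕ) → DR2 U2 Z2 t) :
    ∀ (k τ : ℕ), (∀ t, τ ≤ t → pol2 t = pol2' t) →
    ∀ (x : X) (o : JHist U1 Z1 U2 Z2 τ),
      alphaRec p r γ cont1 pol2 k τ x o = alphaRec p r γ cont1 pol2' k τ x o
  | 0, τ, _, x, o => rfl
  | k+1, τ, h, x, o => by
    have hrec := alphaRec_congr pol2 pol2' k (τ+1)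
      (fun t ht => h t (le_trans (Nat.le_succ τ) ht))
    simp only [alphaRec, h τ le_rfl, hrec]

/-- Uniform bound on `k`-stage values. -/
noncomputable def Bnd (M γ : ℝ) : ℕ → ℝ
  | 0 => 0
  | k+1 => M + γ * Bnd M γ k

lemma Bnd_nonneg {M γ : ℝ} (hM : 0 ≤ M) (hγ : 0 ≤ γ) : ∀ k, 0 ≤ Bnd M γ k
  | 0 => le_refl _
  | k+1 => by
    have := Bnd_nonneg hM hγ k
    simp only [Bnd]; positivity

/-- Maximal absolute reward. -/
noncomputable def Mr [Nonempty X] [Nonempty U1] [Nonempty U2] : ℝ :=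
  Finset.univ.sup' Finset.univ_nonempty (fun xu : X × (U1 × U2) => |r xu.1 xu.2|)

lemma abs_r_le_Mr [Nonempty X] [Nonempty U1] [Nonempty U2] (x : X) (u : U1 × U2) :
    |r x u| ≤ Mr r :=
  Finset.le_sup' (fun xu : X × (U1 × U2) => |r xu.1 xu.2|) (Finset.mem_univ (x, u))

lemma Mr_nonneg [Nonempty X] [Nonempty U1] [Nonempty U2] : 0 ≤ Mr r :=
  le_trans (abs_nonneg _) (abs_r_le_Mr r (Classical.arbitrary X) (Classical.arbitrary _))

lemma abs_alphaRec_le [Nonempty X] [Nonempty U1] [Nonempty U2]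
    (hp : ∀ x u, IsDist (p x u)) (hγ : 0 ≤ γ)
    (pol2 : (t : ℕ) → DR2 U2 Z2 t) :
    ∀ (k τ : ℕ) (x : X) (o : JHist U1 Z1 U2 Z2 τ),
      |alphaRec p r γ cont1 pol2 k τ x o| ≤ Bnd (Mr r) γ k
  | 0, τ, x, o => by simp [alphaRec, Bnd]
  | k+1, τ, x, o => by
    have IH := abs_alphaRec_le hp hγ pol2 k
    show |∑ u : U1 × U2, _| ≤ _
    simp only [Bnd]
    refine sum_weight_abs_le
      (w := fun u : U1 × U2 => (cont1 τ).1 o.1 u.1 * (pol2 τ).1 o.2 u.2)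
      (fun u => mul_nonneg (((cont1 τ).2 o.1).1 u.1) (((pol2 τ).2 o.2).1 u.2))
      (sum_prod_dist ((cont1 τ).2 o.1).2 ((pol2 τ).2 o.2).2) (fun u => ?_)
    refine (abs_add_le _ _).trans (add_le_add (abs_r_le_Mr r x u) ?_)
    rw [abs_mul, abs_of_nonneg hγ]
    refine mul_le_mul_of_nonneg_left ?_ hγ
    refine (Finset.abs_sum_le_sum_abs _ _).trans ?_
    calc ∑ yz : X × (Z1 × Z2), |p x u yz * alphaRec p r γ cont1 pol2 k (τ+1) yz.1
          (Fin.snoc o.1 (u.1, yz.2.1), Fin.snoc o.2 (u.2, yz.2.2))|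
        ≤ ∑ yz, p x u yz * Bnd (Mr r) γ k := Finset.sum_le_sum fun yz _ => by
            rw [abs_mul, abs_of_nonneg ((hp x u).1 yz)]
            exact mul_le_mul_of_nonneg_left (IH _ _ _) ((hp x u).1 yz)
      _ = Bnd (Mr r) γ k := by rw [← Finset.sum_mul, (hp x u).2, one_mul]

end Aux2
section Aux3

open Finset

variable {X U1 U2 Z1 Z2 : Type}
variable [Fintype X] [Fintype U1] [Fintype U2] [Fintype Z1] [Fintype Z2]

variable (p : X → U1 × U2 → X × (Z1 × Z2) → ℝ) (r : X → U1 × U2 → ℝ) (γ : ℝ)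
variable (cont1 : (t : ℕ) → DR1 U1 Z1 t)

/-- Updated (unnormalized) player-2-conditional weight after branch `(u2, z2)`. -/
noncomputable def cnext (τ : ℕ) (c : X × Hist1 U1 Z1 τ → ℝ) (u2 : U2) (z2 : Z2) :
    X × Hist1 U1 Z1 (τ+1) → ℝ := fun w =>
  ∑ x : X, c (x, Fin.init w.2) * (cont1 τ).1 (Fin.init w.2) ((w.2 (Fin.last τ)).1) *
    p x ((w.2 (Fin.last τ)).1, u2) (w.1, ((w.2 (Fin.last τ)).2, z2))

lemma cnext_nonneg (hp : ∀ x u, IsDist (p x u)) (τ : ℕ)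
    {c : X × Hist1 U1 Z1 τ → ℝ} (hc : ∀ y, 0 ≤ c y) (u2 : U2) (z2 : Z2)
    (w : X × Hist1 U1 Z1 (τ+1)) : 0 ≤ cnext p cont1 τ c u2 z2 w := by
  refine Finset.sum_nonneg fun x _ => ?_
  exact mul_nonneg (mul_nonneg (hc _) (((cont1 τ).2 _).1 _)) ((hp _ _).1 _)

/-- Reindexing equivalence used to unfold sums over next-stage player-1 histories. -/
def reEquiv (τ : ℕ) : ((X × Hist1 U1 Z1 τ) × U1 × (X × Z1)) ≃ ((X × Hist1 U1 Z1 (τ+1)) × X) where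
  toFun q := ((q.2.2.1, Fin.snoc q.1.2 (q.2.1, q.2.2.2)), q.1.1)
  invFun w := ((w.2, Fin.init w.1.2), ((w.1.2 (Fin.last τ)).1, (w.1.1, (w.1.2 (Fin.last τ)).2)))
  left_inv q := by
    obtain ⟨⟨x, o⟩, u1, x', z1⟩ := q
    simp [Fin.init_snoc]
  right_inv w := by
    obtain ⟨⟨x', h⟩, x⟩ := w
    simp [Fin.snoc_init_self]

lemma sum_pair_reindex (τ : ℕ) (G : (X × Hist1 U1 Z1 (τ+1)) × X → ℝ) :
    ∑ pair : (X × Hist1 U1 Z1 (τ+1)) × X, G pair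
      = ∑ q : (X × Hist1 U1 Z1 τ) × U1 × (X × Z1),
          G ((q.2.2.1, Fin.snoc q.1.2 (q.2.1, q.2.2.2)), q.1.1) := by
  rw [← Equiv.sum_comp (reEquiv (X := X) (U1 := U1) (Z1 := Z1) τ) G]
  rfl

lemma sum_cnext (τ : ℕ) (c : X × Hist1 U1 Z1 τ → ℝ) (u2 : U2) (z2 : Z2)
    (F : X × Hist1 U1 Z1 (τ+1) → ℝ) :
    ∑ w : X × Hist1 U1 Z1 (τ+1), cnext p cont1 τ c u2 z2 w * F w
      = ∑ y : X × Hist1 U1 Z1 τ, c y * ∑ u1 : U1, (cont1 τ).1 y.2 u1 *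
          ∑ xz : X × Z1, p y.1 (u1, u2) (xz.1, (xz.2, z2)) * F (xz.1, Fin.snoc y.2 (u1, xz.2)) := by
  simp only [cnext, Finset.sum_mul]
  rw [← Fintype.sum_prod_type (f := fun pair : (X × Hist1 U1 Z1 (τ+1)) × X =>
    c (pair.2, Fin.init pair.1.2) *
      (cont1 τ).1 (Fin.init pair.1.2) ((pair.1.2 (Fin.last τ)).1) *
      p pair.2 ((pair.1.2 (Fin.last τ)).1, u2) (pair.1.1, ((pair.1.2 (Fin.last τ)).2, z2)) *
      F pair.1)]
  rw [sum_pair_reindex]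
  rw [Fintype.sum_prod_type]
  refine Finset.sum_congr rfl fun y _ => ?_
  rw [Finset.mul_sum, Fintype.sum_prod_type]
  refine Finset.sum_congr rfl fun u1 _ => ?_
  rw [← mul_assoc, Finset.mul_sum]
  refine Finset.sum_congr rfl fun xz _ => ?_
  simp only [Fin.init_snoc, Fin.snoc_last]
  ring

end Aux3
section Aux4

open Finset

variable {X U1 U2 Z1 Z2 : Type}
variable [Fintype X] [Fintype U1] [Fintype U2] [Fintype Z1] [Fintype Z2]

lemma sum_xz_split {M : Type} [AddCommMonoid M] (f : X × (Z1 × Z2) → M) :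
    ∑ yz : X × (Z1 × Z2), f yz = ∑ z2 : Z2, ∑ xz : X × Z1, f (xz.1, (xz.2, z2)) := by
  calc ∑ yz : X × (Z1 × Z2), f yz
      = ∑ x : X, ∑ z12 : Z1 × Z2, f (x, z12) := Fintype.sum_prod_type _
    _ = ∑ x : X, ∑ z1 : Z1, ∑ z2 : Z2, f (x, (z1, z2)) :=
        Finset.sum_congr rfl fun x _ => Fintype.sum_prod_type _
    _ = ∑ x : X, ∑ z2 : Z2, ∑ z1 : Z1, f (x, (z1, z2)) :=
        Finset.sum_congr rfl fun x _ => Finset.sum_comm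
    _ = ∑ z2 : Z2, ∑ x : X, ∑ z1 : Z1, f (x, (z1, z2)) := Finset.sum_comm
    _ = ∑ z2 : Z2, ∑ xz : X × Z1, f (xz.1, (xz.2, z2)) :=
        Finset.sum_congr rfl fun z2 _ =>
          (Fintype.sum_prod_type (fun xz : X × Z1 => f (xz.1, (xz.2, z2)))).symm

variable (p : X → U1 × U2 → X × (Z1 × Z2) → ℝ) (r : X → U1 × U2 → ℝ) (γ : ℝ)
variable (cont1 : (t : ℕ) → DR1 U1 Z1 t)

lemma reorg (τ : ℕ) (c : X × Hist1 U1 Z1 τ → ℝ) (u2 : U2)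
    (G : Z2 → (X × Hist1 U1 Z1 (τ+1) → ℝ)) :
    ∑ y : X × Hist1 U1 Z1 τ, c y * ∑ u1 : U1, (cont1 τ).1 y.2 u1 *
        (r y.1 (u1, u2) + γ * ∑ yz : X × (Z1 × Z2), p y.1 (u1, u2) yz *
          G yz.2.2 (yz.1, Fin.snoc y.2 (u1, yz.2.1)))
      = (∑ y : X × Hist1 U1 Z1 τ, c y * ∑ u1 : U1, (cont1 τ).1 y.2 u1 * r y.1 (u1, u2))
        + γ * ∑ z2 : Z2, ∑ w : X × Hist1 U1 Z1 (τ+1), cnext p cont1 τ c u2 z2 w * G z2 w := by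
  simp only [sum_cnext]
  simp only [mul_add, Finset.mul_sum, Finset.sum_add_distrib]
  congr 1
  conv_rhs => rw [Finset.sum_comm]
  refine Finset.sum_congr rfl fun y _ => ?_
  conv_rhs => rw [Finset.sum_comm]
  refine Finset.sum_congr rfl fun u1 _ => ?_
  rw [sum_xz_split (fun yz => c y * ((cont1 τ).1 y.2 u1 *
    (γ * (p y.1 (u1, u2) yz * G yz.2.2 (yz.1, Fin.snoc y.2 (u1, yz.2.1))))))]
  refine Finset.sum_congr rfl fun z2 _ => ?_
  refine Finset.sum_congr rfl fun xz _ => ?_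
  ring

lemma swap_u {H : Type} [Fintype H] (a1 : H → U1 → ℝ) (cc : H → ℝ) (B : U2 → ℝ)
    (E : H → U1 → U2 → ℝ) :
    ∑ y : H, cc y * ∑ u : U1 × U2, a1 y u.1 * B u.2 * E y u.1 u.2
      = ∑ u2 : U2, B u2 * ∑ y : H, cc y * ∑ u1 : U1, a1 y u1 * E y u1 u2 := by
  calc ∑ y : H, cc y * ∑ u : U1 × U2, a1 y u.1 * B u.2 * E y u.1 u.2
      = ∑ y : H, ∑ u1 : U1, ∑ u2 : U2, cc y * (a1 y u1 * B u2 * E y u1 u2) := by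
        refine Finset.sum_congr rfl fun y _ => ?_
        rw [Fintype.sum_prod_type (fun u : U1 × U2 => a1 y u.1 * B u.2 * E y u.1 u.2),
          Finset.mul_sum]
        exact Finset.sum_congr rfl fun u1 _ => Finset.mul_sum _ _ _
    _ = ∑ y : H, ∑ u2 : U2, ∑ u1 : U1, cc y * (a1 y u1 * B u2 * E y u1 u2) :=
        Finset.sum_congr rfl fun y _ => Finset.sum_comm
    _ = ∑ u2 : U2, ∑ y : H, ∑ u1 : U1, cc y * (a1 y u1 * B u2 * E y u1 u2) :=
        Finset.sum_comm
    _ = ∑ u2 : U2, B u2 * ∑ y : H, cc y * ∑ u1 : U1, a1 y u1 * E y u1 u2 := by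
        refine Finset.sum_congr rfl fun u2 _ => ?_
        rw [Finset.mul_sum]
        refine Finset.sum_congr rfl fun y _ => ?_
        rw [Finset.mul_sum, Finset.mul_sum]
        exact Finset.sum_congr rfl fun u1 _ => by ring

lemma inf'_AV_le [Nonempty U2] (hp : ∀ x u, IsDist (p x u)) (hγ : 0 ≤ γ) :
    ∀ (k τ : ℕ) (pol2 : (t : ℕ) → DR2 U2 Z2 t) (o2 : Hist2 U2 Z2 τ)
      (c : X × Hist1 U1 Z1 τ → ℝ), (∀ y, 0 ≤ c y) →
      (AV p r γ cont1 k τ).inf' (AV_nonempty p r γ cont1 k τ)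
          (fun β => ∑ y : X × Hist1 U1 Z1 τ, c y * β y)
        ≤ ∑ y : X × Hist1 U1 Z1 τ, c y * alphaRec p r γ cont1 pol2 k τ y.1 (y.2, o2)
  | 0, τ, pol2, o2, c, hc => by
      simp [AV, alphaRec]
  | k+1, τ, pol2, o2, c, hc => by
      classical
      have step1 : ∑ y : X × Hist1 U1 Z1 τ,
          c y * alphaRec p r γ cont1 pol2 (k+1) τ y.1 (y.2, o2)
          = ∑ u2 : U2, (pol2 τ).1 o2 u2 *
              ((∑ y : X × Hist1 U1 Z1 τ, c y * ∑ u1 : U1,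
                  (cont1 τ).1 y.2 u1 * r y.1 (u1, u2))
                + γ * ∑ z2 : Z2, ∑ w : X × Hist1 U1 Z1 (τ+1),
                    cnext p cont1 τ c u2 z2 w *
                      alphaRec p r γ cont1 pol2 k (τ+1) w.1 (w.2, Fin.snoc o2 (u2, z2))) := by
        rw [show ∑ y : X × Hist1 U1 Z1 τ,
            c y * alphaRec p r γ cont1 pol2 (k+1) τ y.1 (y.2, o2)
            = ∑ u2 : U2, (pol2 τ).1 o2 u2 * ∑ y : X × Hist1 U1 Z1 τ, c y * ∑ u1 : U1,
                (cont1 τ).1 y.2 u1 *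
                  (r y.1 (u1, u2) + γ * ∑ yz : X × (Z1 × Z2), p y.1 (u1, u2) yz *
                    alphaRec p r γ cont1 pol2 k (τ+1) yz.1
                      (Fin.snoc y.2 (u1, yz.2.1), Fin.snoc o2 (u2, yz.2.2)))
          from swap_u ((cont1 τ).1 ∘ Prod.snd) c ((pol2 τ).1 o2)
            (fun y u1 u2 => r y.1 (u1, u2) + γ * ∑ yz : X × (Z1 × Z2), p y.1 (u1, u2) yz *
              alphaRec p r γ cont1 pol2 k (τ+1) yz.1
                (Fin.snoc y.2 (u1, yz.2.1), Fin.snoc o2 (u2, yz.2.2)))]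
        refine Finset.sum_congr rfl fun u2 _ => ?_
        congr 1
        exact reorg p r γ cont1 τ c u2
          (fun z2 w => alphaRec p r γ cont1 pol2 k (τ+1) w.1 (w.2, Fin.snoc o2 (u2, z2)))
      rw [step1]
      have step2 : ∀ u2 : U2,
          (AV p r γ cont1 (k+1) τ).inf' (AV_nonempty p r γ cont1 (k+1) τ)
            (fun β => ∑ y : X × Hist1 U1 Z1 τ, c y * β y)
          ≤ (∑ y : X × Hist1 U1 Z1 τ, c y * ∑ u1 : U1,
                (cont1 τ).1 y.2 u1 * r y.1 (u1, u2))
              + γ * ∑ z2 : Z2, ∑ w : X × Hist1 U1 Z1 (τ+1),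
                  cnext p cont1 τ c u2 z2 w *
                    alphaRec p r γ cont1 pol2 k (τ+1) w.1 (w.2, Fin.snoc o2 (u2, z2)) := by
        intro u2
        have hch : ∀ z2 : Z2, ∃ β ∈ AV p r γ cont1 k (τ+1),
            (AV p r γ cont1 k (τ+1)).inf' (AV_nonempty p r γ cont1 k (τ+1))
              (fun β => ∑ w : X × Hist1 U1 Z1 (τ+1), cnext p cont1 τ c u2 z2 w * β w)
              = ∑ w : X × Hist1 U1 Z1 (τ+1), cnext p cont1 τ c u2 z2 w * β w :=
          fun z2 => Finset.exists_mem_eq_inf' _ _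
        choose g hg hginf using hch
        have hmem : buildAV p r γ cont1 τ u2 g ∈ AV p r γ cont1 (k+1) τ :=
          (mem_AV_succ p r γ cont1).2 ⟨u2, g, hg, rfl⟩
        refine le_trans (Finset.inf'_le _ hmem) ?_
        have hbuild : ∑ y : X × Hist1 U1 Z1 τ, c y * buildAV p r γ cont1 τ u2 g y
            = (∑ y : X × Hist1 U1 Z1 τ, c y * ∑ u1 : U1,
                (cont1 τ).1 y.2 u1 * r y.1 (u1, u2))
              + γ * ∑ z2 : Z2, ∑ w : X × Hist1 U1 Z1 (τ+1),
                  cnext p cont1 τ c u2 z2 w * g z2 w :=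
          reorg p r γ cont1 τ c u2 g
        show ∑ y : X × Hist1 U1 Z1 τ, c y * buildAV p r γ cont1 τ u2 g y ≤ _
        rw [hbuild]
        refine add_le_add_right (mul_le_mul_of_nonneg_left
          (Finset.sum_le_sum fun z2 _ => ?_) hγ) _
        rw [← hginf z2]
        exact inf'_AV_le hp hγ k (τ+1) pol2 (Fin.snoc o2 (u2, z2)) _
          (cnext_nonneg p cont1 hp τ hc u2 z2)
      calc (AV p r γ cont1 (k+1) τ).inf' (AV_nonempty p r γ cont1 (k+1) τ)
            (fun β => ∑ y : X × Hist1 U1 Z1 τ, c y * β y)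
          = ∑ u2 : U2, (pol2 τ).1 o2 u2 *
              ((AV p r γ cont1 (k+1) τ).inf' (AV_nonempty p r γ cont1 (k+1) τ)
                (fun β => ∑ y : X × Hist1 U1 Z1 τ, c y * β y)) := by
            rw [← Finset.sum_mul, ((pol2 τ).2 o2).2, one_mul]
        _ ≤ _ := Finset.sum_le_sum fun u2 _ =>
            mul_le_mul_of_nonneg_left (step2 u2) (((pol2 τ).2 o2).1 u2)

end Aux4
section Aux5

open Finset

variable {X U1 U2 Z1 Z2 : Type}
variable [Fintype X] [Fintype U1] [Fintype U2] [Fintype Z1] [Fintype Z2]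
variable (p : X → U1 × U2 → X × (Z1 × Z2) → ℝ) (r : X → U1 × U2 → ℝ) (γ : ℝ)
variable (cont1 : (t : ℕ) → DR1 U1 Z1 t)

open Classical in
/-- The deterministic stage decision rule selecting `d o` at history `o`. -/
noncomputable def detDR2 (τ : ℕ) (d : Hist2 U2 Z2 τ → U2) : DR2 U2 Z2 τ :=
  ⟨fun o u => if u = d o then 1 else 0, fun o =>
    ⟨fun u => by dsimp only; split <;> norm_num, by simp⟩⟩

lemma exists_pol2_family [Nonempty U2] :
    ∀ (k τ : ℕ) (b : Hist2 U2 Z2 τ → (X × Hist1 U1 Z1 τ → ℝ)),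
      (∀ o2, b o2 ∈ AV p r γ cont1 k τ) →
      ∃ pol2 : (t : ℕ) → DR2 U2 Z2 t, ∀ (o2 : Hist2 U2 Z2 τ) (x : X) (o1 : Hist1 U1 Z1 τ),
        alphaRec p r γ cont1 pol2 k τ x (o1, o2) = b o2 (x, o1)
  | 0, τ, b, hb => by
      refine ⟨Classical.arbitrary _, fun o2 x o1 => ?_⟩
      have hb0 : b o2 = 0 := by simpa [AV] using hb o2
      simp [alphaRec, hb0]
  | k+1, τ, b, hb => by
      classical
      have h1 : ∀ o2 : Hist2 U2 Z2 τ, ∃ u2 g, (∀ z2, g z2 ∈ AV p r γ cont1 k (τ+1)) ∧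
          b o2 = buildAV p r γ cont1 τ u2 g :=
        fun o2 => (mem_AV_succ p r γ cont1).1 (hb o2)
      choose u2f gf hgf hbf using h1
      set b' : Hist2 U2 Z2 (τ+1) → (X × Hist1 U1 Z1 (τ+1) → ℝ) :=
        fun h => gf (Fin.init h) ((h (Fin.last τ)).2) with hb'
      obtain ⟨pol2', hpol2'⟩ := exists_pol2_family k (τ+1) b' (fun h => hgf _ _)
      refine ⟨Function.update pol2' τ (detDR2 τ u2f), fun o2 x o1 => ?_⟩
      have hcongr : ∀ (y : X) (o : JHist U1 Z1 U2 Z2 (τ+1)),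
          alphaRec p r γ cont1 (Function.update pol2' τ (detDR2 τ u2f)) k (τ+1) y o
            = alphaRec p r γ cont1 pol2' k (τ+1) y o :=
        alphaRec_congr p r γ cont1 _ _ k (τ+1)
          (fun t ht => Function.update_of_ne (by omega) _ _)
      rw [hbf o2]
      show ∑ u : U1 × U2, _ = _
      simp only [alphaRec, hcongr, Function.update_self, hpol2', hb']
      simp only [Fin.init_snoc, Fin.snoc_last]
      rw [Fintype.sum_prod_type (fun u : U1 × U2 =>
        (cont1 τ).1 o1 u.1 * (detDR2 (U2 := U2) (Z2 := Z2) τ u2f).1 o2 u.2 *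
          (r x u + γ * ∑ yz : X × (Z1 × Z2), p x u yz *
            gf o2 yz.2.2 (yz.1, Fin.snoc o1 (u.1, yz.2.1))))]
      show _ = buildAV p r γ cont1 τ (u2f o2) (gf o2) (x, o1)
      simp only [buildAV]
      refine Finset.sum_congr rfl fun u1 _ => ?_
      rw [Finset.sum_eq_single (u2f o2)]
      · simp [detDR2]
      · intro b _ hb2
        simp [detDR2, hb2]
      · simp

end Aux5
section Aux6

open Finset

variable {X U1 U2 Z1 Z2 : Type}
variable [Fintype X] [Fintype U1] [Fintype U2] [Fintype Z1] [Fintype Z2]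

lemma sum_rot3 {A B C M : Type} [Fintype A] [Fintype B] [Fintype C] [AddCommMonoid M]
    (f : A → B → C → M) :
    ∑ a : A, ∑ b : B, ∑ c : C, f a b c = ∑ b : B, ∑ c : C, ∑ a : A, f a b c :=
  calc ∑ a : A, ∑ b : B, ∑ c : C, f a b c
      = ∑ b : B, ∑ a : A, ∑ c : C, f a b c := Finset.sum_comm
    _ = ∑ b : B, ∑ c : C, ∑ a : A, f a b c :=
        Finset.sum_congr rfl fun b _ => Finset.sum_comm

lemma sum_rot4 {A B C D M : Type} [Fintype A] [Fintype B] [Fintype C] [Fintype D]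
    [AddCommMonoid M] (f : A → B → C → D → M) :
    ∑ a : A, ∑ b : B, ∑ c : C, ∑ d : D, f a b c d
      = ∑ b : B, ∑ c : C, ∑ d : D, ∑ a : A, f a b c d :=
  calc ∑ a : A, ∑ b : B, ∑ c : C, ∑ d : D, f a b c d
      = ∑ b : B, ∑ a : A, ∑ c : C, ∑ d : D, f a b c d := Finset.sum_comm
    _ = ∑ b : B, ∑ c : C, ∑ d : D, ∑ a : A, f a b c d :=
        Finset.sum_congr rfl fun b _ => sum_rot3 _

/-- Reindexing equivalence for next-stage joint histories. -/
def jEquiv (τ : ℕ) :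
    (JHist U1 Z1 U2 Z2 τ × (U1 × U2) × (X × (Z1 × Z2))) ≃ (X × JHist U1 Z1 U2 Z2 (τ+1)) where
  toFun q := (q.2.2.1, (Fin.snoc q.1.1 (q.2.1.1, q.2.2.2.1), Fin.snoc q.1.2 (q.2.1.2, q.2.2.2.2)))
  invFun yo := (((Fin.init yo.2.1, Fin.init yo.2.2),
    ((yo.2.1 (Fin.last τ)).1, (yo.2.2 (Fin.last τ)).1),
    (yo.1, ((yo.2.1 (Fin.last τ)).2, (yo.2.2 (Fin.last τ)).2))))
  left_inv q := by
    obtain ⟨⟨o1, o2⟩, ⟨u1, u2⟩, ⟨y, z1, z2⟩⟩ := q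
    simp [Fin.init_snoc]
  right_inv yo := by
    obtain ⟨y, h1, h2⟩ := yo
    simp [Fin.snoc_init_self]

lemma sum_jhist_succ {M : Type} [AddCommMonoid M] (τ : ℕ)
    (f : X × JHist U1 Z1 U2 Z2 (τ+1) → M) :
    ∑ yo : X × JHist U1 Z1 U2 Z2 (τ+1), f yo
      = ∑ o : JHist U1 Z1 U2 Z2 τ, ∑ u : U1 × U2, ∑ yz : X × (Z1 × Z2),
          f (yz.1, (Fin.snoc o.1 (u.1, yz.2.1), Fin.snoc o.2 (u.2, yz.2.2))) := by
  rw [← Equiv.sum_comp (jEquiv (X := X) (U1 := U1) (U2 := U2) (Z1 := Z1) (Z2 := Z2) τ) f]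
  rw [Fintype.sum_prod_type (fun q : JHist U1 Z1 U2 Z2 τ × ((U1 × U2) × (X × (Z1 × Z2))) =>
    f (jEquiv τ q))]
  refine Finset.sum_congr rfl fun o _ => ?_
  rw [Fintype.sum_prod_type (fun q : (U1 × U2) × (X × (Z1 × Z2)) => f (jEquiv τ (o, q)))]
  rfl

variable (p : X → U1 × U2 → X × (Z1 × Z2) → ℝ) (r : X → U1 × U2 → ℝ) (γ : ℝ)
variable (cont1 : (t : ℕ) → DR1 U1 Z1 t)

lemma Tstage_snoc (τ : ℕ) (s : X × JHist U1 Z1 U2 Z2 τ → ℝ)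
    (a1 : DR1 U1 Z1 τ) (a2 : DR2 U2 Z2 τ) (o : JHist U1 Z1 U2 Z2 τ)
    (u : U1 × U2) (yz : X × (Z1 × Z2)) :
    Tstage p τ s a1 a2 (yz.1, (Fin.snoc o.1 (u.1, yz.2.1), Fin.snoc o.2 (u.2, yz.2.2)))
      = a1.1 o.1 u.1 * a2.1 o.2 u.2 * ∑ x : X, s (x, o) * p x u yz := by
  show a1.1 (fun i => (Fin.snoc o.1 (u.1, yz.2.1) : Hist1 U1 Z1 (τ+1)) i.castSucc) _ * _ * _ = _
  simp only [fun_snoc_castSucc, Fin.snoc_last]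

lemma Tstage_isDist (hp : ∀ x u, IsDist (p x u)) (τ : ℕ)
    {s : X × JHist U1 Z1 U2 Z2 τ → ℝ} (hs : IsDist s)
    (a1 : DR1 U1 Z1 τ) (a2 : DR2 U2 Z2 τ) : IsDist (Tstage p τ s a1 a2) := by
  constructor
  · intro yo
    refine mul_nonneg (mul_nonneg ((a1.2 _).1 _) ((a2.2 _).1 _)) ?_
    exact Finset.sum_nonneg fun x _ => mul_nonneg (hs.1 _) ((hp _ _).1 _)
  · rw [sum_jhist_succ]
    have h1 : ∀ o : JHist U1 Z1 U2 Z2 τ, ∀ u : U1 × U2,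
        ∑ yz : X × (Z1 × Z2),
          Tstage p τ s a1 a2 (yz.1, (Fin.snoc o.1 (u.1, yz.2.1), Fin.snoc o.2 (u.2, yz.2.2)))
        = a1.1 o.1 u.1 * a2.1 o.2 u.2 * ∑ x : X, s (x, o) := by
      intro o u
      simp only [Tstage_snoc]
      rw [← Finset.mul_sum]
      congr 1
      rw [Finset.sum_comm]
      refine (Finset.sum_congr rfl fun x _ => ?_).trans rfl
      rw [← Finset.mul_sum, (hp x u).2, mul_one]
    simp only [h1]
    have h2 : ∀ o : JHist U1 Z1 U2 Z2 τ,
        ∑ u : U1 × U2, a1.1 o.1 u.1 * a2.1 o.2 u.2 * ∑ x : X, s (x, o)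
          = ∑ x : X, s (x, o) := by
      intro o
      rw [← Finset.sum_mul, sum_prod_dist (a1.2 o.1).2 (a2.2 o.2).2, one_mul]
    simp only [h2]
    rw [← hs.2, Fintype.sum_prod_type (f := s)]
    exact Finset.sum_comm

lemma expand_alpha (k τ : ℕ) (s : X × JHist U1 Z1 U2 Z2 τ → ℝ)
    (pol2 : (t : ℕ) → DR2 U2 Z2 t) :
    ∑ xo : X × JHist U1 Z1 U2 Z2 τ, s xo * alphaRec p r γ cont1 pol2 (k+1) τ xo.1 xo.2
      = Rstage r τ s (cont1 τ) (pol2 τ)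
        + γ * ∑ yo : X × JHist U1 Z1 U2 Z2 (τ+1),
            Tstage p τ s (cont1 τ) (pol2 τ) yo * alphaRec p r γ cont1 pol2 k (τ+1) yo.1 yo.2 := by
  have hR2 : ∑ yo : X × JHist U1 Z1 U2 Z2 (τ+1),
      Tstage p τ s (cont1 τ) (pol2 τ) yo * alphaRec p r γ cont1 pol2 k (τ+1) yo.1 yo.2
      = ∑ o : JHist U1 Z1 U2 Z2 τ, ∑ u : U1 × U2, ∑ yz : X × (Z1 × Z2),
          ((cont1 τ).1 o.1 u.1 * (pol2 τ).1 o.2 u.2 * ∑ x : X, s (x, o) * p x u yz) *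
            alphaRec p r γ cont1 pol2 k (τ+1) yz.1
              (Fin.snoc o.1 (u.1, yz.2.1), Fin.snoc o.2 (u.2, yz.2.2)) := by
    rw [sum_jhist_succ]
    exact Finset.sum_congr rfl fun o _ => Finset.sum_congr rfl fun u _ =>
      Finset.sum_congr rfl fun yz _ => by rw [Tstage_snoc]
  rw [hR2]
  simp only [alphaRec]
  have hsplit : ∀ (A R S : U1 × U2 → ℝ),
      ∑ u : U1 × U2, A u * (R u + γ * S u)
        = (∑ u : U1 × U2, A u * R u) + ∑ u : U1 × U2, A u * (γ * S u) := by
    intro A R S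
    rw [← Finset.sum_add_distrib]
    exact Finset.sum_congr rfl fun u _ => by ring
  have hxo : ∀ xo : X × JHist U1 Z1 U2 Z2 τ,
      s xo * ∑ u : U1 × U2, (cont1 τ).1 xo.2.1 u.1 * (pol2 τ).1 xo.2.2 u.2 *
          (r xo.1 u + γ * ∑ yz : X × (Z1 × Z2), p xo.1 u yz *
            alphaRec p r γ cont1 pol2 k (τ+1) yz.1
              (Fin.snoc xo.2.1 (u.1, yz.2.1), Fin.snoc xo.2.2 (u.2, yz.2.2)))
        = s xo * (∑ u : U1 × U2, (cont1 τ).1 xo.2.1 u.1 * (pol2 τ).1 xo.2.2 u.2 * r xo.1 u)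
          + ∑ u : U1 × U2, ∑ yz : X × (Z1 × Z2),
              γ * (s xo * ((cont1 τ).1 xo.2.1 u.1 * ((pol2 τ).1 xo.2.2 u.2 *
                (p xo.1 u yz * alphaRec p r γ cont1 pol2 k (τ+1) yz.1
                  (Fin.snoc xo.2.1 (u.1, yz.2.1), Fin.snoc xo.2.2 (u.2, yz.2.2)))))) := by
    intro xo
    rw [hsplit, mul_add]
    congr 1
    rw [Finset.mul_sum]
    refine Finset.sum_congr rfl fun u _ => ?_
    rw [Finset.mul_sum, Finset.mul_sum, Finset.mul_sum]
    exact Finset.sum_congr rfl fun yz _ => by ring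
  simp only [hxo]
  rw [Finset.sum_add_distrib]
  congr 1
  rw [Fintype.sum_prod_type]
  rw [sum_rot4]
  simp only [Finset.mul_sum, Finset.sum_mul]
  refine Finset.sum_congr rfl fun o _ => Finset.sum_congr rfl fun u _ =>
    Finset.sum_congr rfl fun yz _ => Finset.sum_congr rfl fun x _ => by ring

end Aux6
section Aux7

open Finset

variable {X U1 U2 Z1 Z2 : Type}
variable [Fintype X] [Fintype U1] [Fintype U2] [Fintype Z1] [Fintype Z2]
variable [Nonempty X] [Nonempty U1] [Nonempty U2] [Nonempty Z1] [Nonempty Z2]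

instance : Nonempty ((t : ℕ) → DR2 U2 Z2 t) :=
  ⟨fun _ => Classical.arbitrary _⟩

variable (p : X → U1 × U2 → X × (Z1 × Z2) → ℝ) (r : X → U1 × U2 → ℝ) (γ : ℝ)
variable (cont1 : (t : ℕ) → DR1 U1 Z1 t)

lemma abs_Rstage_le (τ : ℕ) {s : X × JHist U1 Z1 U2 Z2 τ → ℝ} (hs : IsDist s)
    (a1 : DR1 U1 Z1 τ) (a2 : DR2 U2 Z2 τ) : |Rstage r τ s a1 a2| ≤ Mr r := by
  refine sum_weight_abs_le hs.1 hs.2 fun xo => ?_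
  refine sum_weight_abs_le (w := fun u : U1 × U2 => a1.1 xo.2.1 u.1 * a2.1 xo.2.2 u.2)
    (fun u => mul_nonneg ((a1.2 _).1 _) ((a2.2 _).1 _))
    (sum_prod_dist (a1.2 _).2 (a2.2 _).2) fun u => abs_r_le_Mr r _ _

lemma abs_vstar_le (hp : ∀ x u, IsDist (p x u)) (hγ : 0 ≤ γ) :
    ∀ (k τ : ℕ) (s : X × JHist U1 Z1 U2 Z2 τ → ℝ), IsDist s →
      |vstar p r γ k τ s| ≤ Bnd (Mr r) γ k
  | 0, τ, s, hs => by simp [vstar, Bnd]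
  | k+1, τ, s, hs => by
    have hF : ∀ (a1 : DR1 U1 Z1 τ) (a2 : DR2 U2 Z2 τ),
        |Rstage r τ s a1 a2 + γ * vstar p r γ k (τ+1) (Tstage p τ s a1 a2)|
          ≤ Bnd (Mr r) γ (k+1) := by
      intro a1 a2
      have h1 := abs_Rstage_le r τ hs a1 a2
      have h2 := abs_vstar_le hp hγ k (τ+1) _ (Tstage_isDist p hp τ hs a1 a2)
      calc |Rstage r τ s a1 a2 + γ * vstar p r γ k (τ+1) (Tstage p τ s a1 a2)|
          ≤ |Rstage r τ s a1 a2| + |γ * vstar p r γ k (τ+1) (Tstage p τ s a1 a2)| :=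
            abs_add_le _ _
        _ ≤ Mr r + γ * Bnd (Mr r) γ k := by
            refine add_le_add h1 ?_
            rw [abs_mul, abs_of_nonneg hγ]
            exact mul_le_mul_of_nonneg_left h2 hγ
        _ = Bnd (Mr r) γ (k+1) := by simp [Bnd]
    have hInf : ∀ a1 : DR1 U1 Z1 τ,
        |⨅ a2 : DR2 U2 Z2 τ, (Rstage r τ s a1 a2
            + γ * vstar p r γ k (τ+1) (Tstage p τ s a1 a2))| ≤ Bnd (Mr r) γ (k+1) := by
      intro a1
      rw [abs_le]
      constructor
      · exact le_ciInf fun a2 => (abs_le.1 (hF a1 a2)).1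
      · refine ciInf_le_of_le ⟨-Bnd (Mr r) γ (k+1), ?_⟩ (Classical.arbitrary _)
          ((abs_le.1 (hF a1 _)).2)
        rintro v ⟨a2, rfl⟩
        exact (abs_le.1 (hF a1 a2)).1
    show |⨆ a1 : DR1 U1 Z1 τ, ⨅ a2 : DR2 U2 Z2 τ, (Rstage r τ s a1 a2
        + γ * vstar p r γ k (τ+1) (Tstage p τ s a1 a2))| ≤ Bnd (Mr r) γ (k+1)
    rw [abs_le]
    constructor
    · refine le_ciSup_of_le ⟨Bnd (Mr r) γ (k+1), ?_⟩ (Classical.arbitrary _)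
        ((abs_le.1 (hInf _)).1)
      rintro v ⟨a1, rfl⟩
      exact (abs_le.1 (hInf a1)).2
    · exact ciSup_le fun a1 => (abs_le.1 (hInf a1)).2

lemma iInf_le_vstar (hp : ∀ x u, IsDist (p x u)) (hγ : 0 ≤ γ) :
    ∀ (k τ : ℕ) (s : X × JHist U1 Z1 U2 Z2 τ → ℝ), IsDist s →
      (⨅ cont2 : (t : ℕ) → DR2 U2 Z2 t,
          ∑ xo : X × JHist U1 Z1 U2 Z2 τ, s xo * alphaRec p r γ cont1 cont2 k τ xo.1 xo.2)
        ≤ vstar p r γ k τ s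
  | 0, τ, s, hs => by
      simp [alphaRec, vstar, ciInf_const]
  | k+1, τ, s, hs => by
      classical
      have hbdd : BddBelow (Set.range fun cont2 : (t : ℕ) → DR2 U2 Z2 t =>
          ∑ xo : X × JHist U1 Z1 U2 Z2 τ,
            s xo * alphaRec p r γ cont1 cont2 (k+1) τ xo.1 xo.2) := by
        refine ⟨-Bnd (Mr r) γ (k+1), ?_⟩
        rintro v ⟨cont2, rfl⟩
        exact sum_dist_mul_le hs fun xo =>
          (abs_le.1 (abs_alphaRec_le p r γ cont1 hp hγ cont2 (k+1) τ xo.1 xo.2)).1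
      have key : ∀ a2 : DR2 U2 Z2 τ,
          (⨅ cont2 : (t : ℕ) → DR2 U2 Z2 t,
              ∑ xo : X × JHist U1 Z1 U2 Z2 τ,
                s xo * alphaRec p r γ cont1 cont2 (k+1) τ xo.1 xo.2)
            ≤ Rstage r τ s (cont1 τ) a2
              + γ * vstar p r γ k (τ+1) (Tstage p τ s (cont1 τ) a2) := by
        intro a2
        have hs' : IsDist (Tstage p τ s (cont1 τ) a2) := Tstage_isDist p hp τ hs _ _
        have IH := iInf_le_vstar hp hγ k (τ+1) (Tstage p τ s (cont1 τ) a2) hs'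
        have h2 : ∀ cont2' : (t : ℕ) → DR2 U2 Z2 t,
            (⨅ cont2 : (t : ℕ) → DR2 U2 Z2 t,
                ∑ xo : X × JHist U1 Z1 U2 Z2 τ,
                  s xo * alphaRec p r γ cont1 cont2 (k+1) τ xo.1 xo.2)
              ≤ Rstage r τ s (cont1 τ) a2
                + γ * ∑ yo : X × JHist U1 Z1 U2 Z2 (τ+1),
                    Tstage p τ s (cont1 τ) a2 yo *
                      alphaRec p r γ cont1 cont2' k (τ+1) yo.1 yo.2 := by
          intro cont2'
          set cont2'' := Function.update cont2' τ a2 with hcont2''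
          have hupe : cont2'' τ = a2 := Function.update_self _ _ _
          have hcongr : ∀ (y : X) (o : JHist U1 Z1 U2 Z2 (τ+1)),
              alphaRec p r γ cont1 cont2'' k (τ+1) y o
                = alphaRec p r γ cont1 cont2' k (τ+1) y o :=
            alphaRec_congr p r γ cont1 _ _ k (τ+1)
              (fun t ht => Function.update_of_ne (by omega) _ _)
          have hval : ∑ xo : X × JHist U1 Z1 U2 Z2 τ,
              s xo * alphaRec p r γ cont1 cont2'' (k+1) τ xo.1 xo.2
              = Rstage r τ s (cont1 τ) a2
                + γ * ∑ yo : X × JHist U1 Z1 U2 Z2 (τ+1),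
                    Tstage p τ s (cont1 τ) a2 yo *
                      alphaRec p r γ cont1 cont2' k (τ+1) yo.1 yo.2 := by
            rw [expand_alpha p r γ cont1 k τ s cont2'', hupe]
            congr 1
            rw [Finset.mul_sum, Finset.mul_sum]
            exact Finset.sum_congr rfl fun yo _ => by rw [hcongr]
          rw [← hval]
          exact ciInf_le hbdd cont2''
        rcases eq_or_lt_of_le hγ with hγ0 | hγpos
        · have := h2 (Classical.arbitrary _)
          rw [← hγ0] at this ⊢
          simpa using this
        · have hdiv : ((⨅ cont2 : (t : ℕ) → DR2 U2 Z2 t,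
              ∑ xo : X × JHist U1 Z1 U2 Z2 τ,
                s xo * alphaRec p r γ cont1 cont2 (k+1) τ xo.1 xo.2)
              - Rstage r τ s (cont1 τ) a2) / γ
              ≤ ⨅ cont2' : (t : ℕ) → DR2 U2 Z2 t,
                  ∑ yo : X × JHist U1 Z1 U2 Z2 (τ+1),
                    Tstage p τ s (cont1 τ) a2 yo *
                      alphaRec p r γ cont1 cont2' k (τ+1) yo.1 yo.2 := by
            refine le_ciInf fun cont2' => ?_
            rw [div_le_iff₀ hγpos]
            have := h2 cont2'
            linarith
          rw [div_le_iff₀ hγpos] at hdiv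
          have := hdiv.trans (mul_le_mul_of_nonneg_right IH (le_of_lt hγpos))
          linarith
      have h3 := le_ciInf key
      refine h3.trans ?_
      show _ ≤ ⨆ a1 : DR1 U1 Z1 τ, ⨅ a2 : DR2 U2 Z2 τ, (Rstage r τ s a1 a2
        + γ * vstar p r γ k (τ+1) (Tstage p τ s a1 a2))
      refine le_ciSup (f := fun a1 : DR1 U1 Z1 τ => ⨅ a2 : DR2 U2 Z2 τ, (Rstage r τ s a1 a2
        + γ * vstar p r γ k (τ+1) (Tstage p τ s a1 a2))) ?_ (cont1 τ)
      refine ⟨Bnd (Mr r) γ (k+1), ?_⟩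
      rintro v ⟨a1, rfl⟩
      refine ciInf_le_of_le ⟨-Bnd (Mr r) γ (k+1), ?_⟩ (Classical.arbitrary _) ?_
      · rintro v' ⟨a2, rfl⟩
        dsimp only
        have hF := abs_Rstage_le r τ hs a1 a2
        have h2' := abs_vstar_le p r γ hp hγ k (τ+1) _ (Tstage_isDist p hp τ hs a1 a2)
        have hmul : |γ * vstar p r γ k (τ+1) (Tstage p τ s a1 a2)| ≤ γ * Bnd (Mr r) γ k := by
          rw [abs_mul, abs_of_nonneg hγ]
          exact mul_le_mul_of_nonneg_left h2' hγ
        have hb : Bnd (Mr r) γ (k+1) = Mr r + γ * Bnd (Mr r) γ k := by simp [Bnd]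
        rw [hb]
        linarith [(abs_le.1 hF).1, (abs_le.1 hmul).1]
      · have hF := abs_Rstage_le r τ hs a1 (Classical.arbitrary _)
        have h2' := abs_vstar_le p r γ hp hγ k (τ+1) _
          (Tstage_isDist p hp τ hs a1 (Classical.arbitrary _))
        have hmul : |γ * vstar p r γ k (τ+1) (Tstage p τ s a1 (Classical.arbitrary _))|
            ≤ γ * Bnd (Mr r) γ k := by
          rw [abs_mul, abs_of_nonneg hγ]
          exact mul_le_mul_of_nonneg_left h2' hγ
        have hb : Bnd (Mr r) γ (k+1) = Mr r + γ * Bnd (Mr r) γ k := by simp [Bnd]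
        rw [hb]
        linarith [(abs_le.1 hF).2, (abs_le.1 hmul).2]

end Aux7
section Aux8

open Finset

variable {X U1 U2 Z1 Z2 : Type}
variable [Fintype X] [Fintype U1] [Fintype U2] [Fintype Z1] [Fintype Z2]

/-- The linear functional on occupancy vectors induced by an α-vector. -/
noncomputable def toLin (τ : ℕ) (β : X × Hist1 U1 Z1 τ → ℝ) :
    (X × Hist1 U1 Z1 τ → ℝ) →ₗ[ℝ] ℝ where
  toFun c := ∑ y : X × Hist1 U1 Z1 τ, c y * β y
  map_add' a b := by simp [add_mul, Finset.sum_add_distrib]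
  map_smul' m a := by simp [smul_eq_mul, Finset.mul_sum, mul_assoc]

lemma sum_split (τ : ℕ) (f : X × JHist U1 Z1 U2 Z2 τ → ℝ) :
    ∑ xo : X × JHist U1 Z1 U2 Z2 τ, f xo
      = ∑ o2 : Hist2 U2 Z2 τ, ∑ y : X × Hist1 U1 Z1 τ, f (y.1, (y.2, o2)) := by
  calc ∑ xo : X × JHist U1 Z1 U2 Z2 τ, f xo
      = ∑ x : X, ∑ o : JHist U1 Z1 U2 Z2 τ, f (x, o) := Fintype.sum_prod_type _
    _ = ∑ x : X, ∑ o1 : Hist1 U1 Z1 τ, ∑ o2 : Hist2 U2 Z2 τ, f (x, (o1, o2)) :=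
        Finset.sum_congr rfl fun x _ => Fintype.sum_prod_type _
    _ = ∑ o2 : Hist2 U2 Z2 τ, ∑ x : X, ∑ o1 : Hist1 U1 Z1 τ, f (x, (o1, o2)) :=
        (sum_rot3 _).symm
    _ = ∑ o2 : Hist2 U2 Z2 τ, ∑ y : X × Hist1 U1 Z1 τ, f (y.1, (y.2, o2)) :=
        Finset.sum_congr rfl fun o2 _ =>
          (Fintype.sum_prod_type (fun y : X × Hist1 U1 Z1 τ => f (y.1, (y.2, o2)))).symm

lemma marg2_eq (τ : ℕ) (s : X × JHist U1 Z1 U2 Z2 τ → ℝ) (o2 : Hist2 U2 Z2 τ) :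
    marg2 τ s o2 = ∑ y : X × Hist1 U1 Z1 τ, s (y.1, (y.2, o2)) :=
  (Fintype.sum_prod_type (fun y : X × Hist1 U1 Z1 τ => s (y.1, (y.2, o2)))).symm

lemma marg2_nonneg (τ : ℕ) {s : X × JHist U1 Z1 U2 Z2 τ → ℝ} (hs : ∀ xo, 0 ≤ s xo)
    (o2 : Hist2 U2 Z2 τ) : 0 ≤ marg2 τ s o2 := by
  rw [marg2_eq]
  exact Finset.sum_nonneg fun y _ => hs _

lemma zero_of_marg2_eq_zero (τ : ℕ) {s : X × JHist U1 Z1 U2 Z2 τ → ℝ}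
    (hs : ∀ xo, 0 ≤ s xo) {o2 : Hist2 U2 Z2 τ} (h : marg2 τ s o2 = 0)
    (y : X × Hist1 U1 Z1 τ) : s (y.1, (y.2, o2)) = 0 := by
  rw [marg2_eq] at h
  exact (Finset.sum_eq_zero_iff_of_nonneg (fun y _ => hs _)).1 h y (Finset.mem_univ y)

lemma sum_condOcc_mul (τ : ℕ) (s : X × JHist U1 Z1 U2 Z2 τ → ℝ)
    {o2 : Hist2 U2 Z2 τ} (h : marg2 τ s o2 ≠ 0) (β : X × Hist1 U1 Z1 τ → ℝ) :
    marg2 τ s o2 * ∑ y : X × Hist1 U1 Z1 τ, condOcc τ s o2 y * β y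
      = ∑ y : X × Hist1 U1 Z1 τ, s (y.1, (y.2, o2)) * β y := by
  rw [Finset.mul_sum]
  refine Finset.sum_congr rfl fun y _ => ?_
  rw [condOcc]
  field_simp

end Aux8

open Classical in
/-- for a fixed player-1 continuation policy `a¹_{τ:}`, the
best-response value
`v^{a¹}_τ(s_τ) = min_{a²_{τ:}} Σ_{x,o} s_τ(x,o) α^{(a¹_{τ:},a²_{τ:})}_τ(x,o)` satisfies:
(i) there is a finite collection `V` of linear functions on `ℝ^{X × O¹_τ}` with
`v^{a¹}_τ(s_τ) = Σ_{o²: s^m_τ(o²) > 0} s^m_τ(o²) ⬝ min_{α ∈ V} α(s^{c,o²}_τ)` for every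
occupancy state `s_τ`; and (ii) `v^{a¹}_τ(s_τ) ≤ v*_τ(s_τ)` for every occupancy state. -/
theorem stmt9
    [Nonempty X] [Nonempty U1] [Nonempty U2] [Nonempty Z1] [Nonempty Z2]
    (p : X → U1 × U2 → X × (Z1 × Z2) → ℝ) (r : X → U1 × U2 → ℝ)
    (s0 : X → ℝ) (γ : ℝ) (ℓ : ℕ)
    (hp : ∀ x u, IsDist (p x u)) (hs0 : IsDist s0) (hγ0 : 0 ≤ γ) (hγ1 : γ < 1)
    (τ : ℕ) (hτ : τ ≤ ℓ) (cont1 : (t : ℕ) → DR1 U1 Z1 t) :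
    (∃ (V : Finset ((X × Hist1 U1 Z1 τ → ℝ) →ₗ[ℝ] ℝ)) (hV : V.Nonempty),
        ∀ s : X × JHist U1 Z1 U2 Z2 τ → ℝ, IsDist s →
          (⨅ cont2 : (t : ℕ) → DR2 U2 Z2 t,
              ∑ xo : X × JHist U1 Z1 U2 Z2 τ,
                s xo * alphaRec p r γ cont1 cont2 (ℓ - τ) τ xo.1 xo.2) =
            ∑ o2 ∈ Finset.univ.filter (fun o2 : Hist2 U2 Z2 τ => 0 < marg2 τ s o2),
              marg2 τ s o2 * V.inf' hV fun α => α (condOcc τ s o2)) ∧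
      ∀ s : X × JHist U1 Z1 U2 Z2 τ → ℝ, IsDist s →
        (⨅ cont2 : (t : ℕ) → DR2 U2 Z2 t,
            ∑ xo : X × JHist U1 Z1 U2 Z2 τ,
              s xo * alphaRec p r γ cont1 cont2 (ℓ - τ) τ xo.1 xo.2) ≤
          vstar p r γ (ℓ - τ) τ s := by
  classical
  have hVne : ((AV p r γ cont1 (ℓ - τ) τ).image (toLin τ)).Nonempty :=
    (AV_nonempty p r γ cont1 (ℓ - τ) τ).image _
  constructor
  · refine ⟨(AV p r γ cont1 (ℓ - τ) τ).image (toLin τ), hVne, ?_⟩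
    intro s hs
    have hVinf : ∀ o2 : Hist2 U2 Z2 τ,
        ((AV p r γ cont1 (ℓ - τ) τ).image (toLin τ)).inf' hVne
            (fun α => α (condOcc τ s o2))
          = (AV p r γ cont1 (ℓ - τ) τ).inf' (AV_nonempty p r γ cont1 (ℓ - τ) τ)
              (fun β => ∑ y : X × Hist1 U1 Z1 τ, condOcc τ s o2 y * β y) := by
      intro o2
      rw [Finset.inf'_image]
      rfl
    simp only [hVinf]
    set IAV : Hist2 U2 Z2 τ → ℝ := fun o2 =>
      (AV p r γ cont1 (ℓ - τ) τ).inf' (AV_nonempty p r γ cont1 (ℓ - τ) τ)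
        (fun β => ∑ y : X × Hist1 U1 Z1 τ, condOcc τ s o2 y * β y) with hIAV
    have hzero : ∀ (g : X × Hist1 U1 Z1 τ → Hist2 U2 Z2 τ → ℝ),
        ∑ o2 ∈ Finset.univ.filter (fun o2 : Hist2 U2 Z2 τ => ¬ 0 < marg2 τ s o2),
          ∑ y : X × Hist1 U1 Z1 τ, s (y.1, (y.2, o2)) * g y o2 = 0 := by
      intro g
      refine Finset.sum_eq_zero fun o2 ho2 => Finset.sum_eq_zero fun y _ => ?_
      have hm0 : marg2 τ s o2 = 0 :=
        le_antisymm (not_lt.1 (Finset.mem_filter.1 ho2).2) (marg2_nonneg τ hs.1 o2)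
      rw [zero_of_marg2_eq_zero τ hs.1 hm0 y, zero_mul]
    have hge : ∀ cont2 : (t : ℕ) → DR2 U2 Z2 t,
        ∑ o2 ∈ Finset.univ.filter (fun o2 : Hist2 U2 Z2 τ => 0 < marg2 τ s o2),
            marg2 τ s o2 * IAV o2
          ≤ ∑ xo : X × JHist U1 Z1 U2 Z2 τ,
              s xo * alphaRec p r γ cont1 cont2 (ℓ - τ) τ xo.1 xo.2 := by
      intro cont2
      rw [sum_split τ (fun xo => s xo * alphaRec p r γ cont1 cont2 (ℓ - τ) τ xo.1 xo.2)]
      rw [← Finset.sum_filter_add_sum_filter_not Finset.univ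
        (fun o2 : Hist2 U2 Z2 τ => 0 < marg2 τ s o2)
        (fun o2 => ∑ y : X × Hist1 U1 Z1 τ,
          s (y.1, (y.2, o2)) * alphaRec p r γ cont1 cont2 (ℓ - τ) τ y.1 (y.2, o2))]
      rw [hzero (fun y o2 => alphaRec p r γ cont1 cont2 (ℓ - τ) τ y.1 (y.2, o2)), add_zero]
      refine Finset.sum_le_sum fun o2 ho2 => ?_
      have hm : 0 < marg2 τ s o2 := (Finset.mem_filter.1 ho2).2
      have h1 : marg2 τ s o2 * IAV o2
          ≤ (AV p r γ cont1 (ℓ - τ) τ).inf' (AV_nonempty p r γ cont1 (ℓ - τ) τ)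
              (fun β => ∑ y : X × Hist1 U1 Z1 τ, s (y.1, (y.2, o2)) * β y) := by
        refine Finset.le_inf' _ _ fun β hβ => ?_
        rw [← sum_condOcc_mul τ s hm.ne' β]
        exact mul_le_mul_of_nonneg_left (Finset.inf'_le _ hβ) hm.le
      exact h1.trans (inf'_AV_le p r γ cont1 hp hγ0 (ℓ - τ) τ cont2 o2
        (fun y => s (y.1, (y.2, o2))) (fun y => hs.1 _))
    have hach : ∀ o2 : Hist2 U2 Z2 τ, ∃ β ∈ AV p r γ cont1 (ℓ - τ) τ,
        IAV o2 = ∑ y : X × Hist1 U1 Z1 τ, condOcc τ s o2 y * β y :=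
      fun o2 => Finset.exists_mem_eq_inf' _ _
    choose b hbmem hbval using hach
    obtain ⟨pol2s, hpol2s⟩ := exists_pol2_family p r γ cont1 (ℓ - τ) τ b hbmem
    have hval : ∑ xo : X × JHist U1 Z1 U2 Z2 τ,
        s xo * alphaRec p r γ cont1 pol2s (ℓ - τ) τ xo.1 xo.2
        = ∑ o2 ∈ Finset.univ.filter (fun o2 : Hist2 U2 Z2 τ => 0 < marg2 τ s o2),
            marg2 τ s o2 * IAV o2 := by
      rw [sum_split τ (fun xo => s xo * alphaRec p r γ cont1 pol2s (ℓ - τ) τ xo.1 xo.2)]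
      rw [← Finset.sum_filter_add_sum_filter_not Finset.univ
        (fun o2 : Hist2 U2 Z2 τ => 0 < marg2 τ s o2)
        (fun o2 => ∑ y : X × Hist1 U1 Z1 τ,
          s (y.1, (y.2, o2)) * alphaRec p r γ cont1 pol2s (ℓ - τ) τ y.1 (y.2, o2))]
      rw [hzero (fun y o2 => alphaRec p r γ cont1 pol2s (ℓ - τ) τ y.1 (y.2, o2)), add_zero]
      refine Finset.sum_congr rfl fun o2 ho2 => ?_
      have hm : 0 < marg2 τ s o2 := (Finset.mem_filter.1 ho2).2
      have hb2 : ∑ y : X × Hist1 U1 Z1 τ,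
          s (y.1, (y.2, o2)) * alphaRec p r γ cont1 pol2s (ℓ - τ) τ y.1 (y.2, o2)
          = ∑ y : X × Hist1 U1 Z1 τ, s (y.1, (y.2, o2)) * b o2 y := by
        refine Finset.sum_congr rfl fun y _ => ?_
        rw [hpol2s o2 y.1 y.2]
      rw [hb2, ← sum_condOcc_mul τ s hm.ne' (b o2), ← hbval o2]
    have hbdd : BddBelow (Set.range fun cont2 : (t : ℕ) → DR2 U2 Z2 t =>
        ∑ xo : X × JHist U1 Z1 U2 Z2 τ,
          s xo * alphaRec p r γ cont1 cont2 (ℓ - τ) τ xo.1 xo.2) := by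
      refine ⟨∑ o2 ∈ Finset.univ.filter (fun o2 : Hist2 U2 Z2 τ => 0 < marg2 τ s o2),
        marg2 τ s o2 * IAV o2, ?_⟩
      rintro v ⟨cont2, rfl⟩
      exact hge cont2
    refine le_antisymm ?_ (le_ciInf hge)
    calc (⨅ cont2 : (t : ℕ) → DR2 U2 Z2 t,
          ∑ xo : X × JHist U1 Z1 U2 Z2 τ,
            s xo * alphaRec p r γ cont1 cont2 (ℓ - τ) τ xo.1 xo.2)
        ≤ ∑ xo : X × JHist U1 Z1 U2 Z2 τ,
            s xo * alphaRec p r γ cont1 pol2s (ℓ - τ) τ xo.1 xo.2 := ciInf_le hbdd pol2s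
      _ = _ := hval
  · intro s hs
    exact iInf_le_vstar p r γ cont1 hp hγ0 (ℓ - τ) τ s hs


end ZSPOSG
end

section
/- In a finite zs-POSG with public actions and observations, each player's history determines the joint history on the support of any reachable occupancy state: for every stage τ, every sequence of joint decision rules (a_0, …, a_{τ−1}) inducing occupancy state s_τ from s0, and every player-2 history o² with positive marginal s^m_τ(o²) > 0, there is exactly one player-1 history o¹ ∈ O¹_τ such that Σ_x s_τ(x, (o¹, o²)) > 0. Consequently, each conditional occupancy state s^{c,o²}_τ is supported on a single player-1 history and is therefore determined by a belief state, i.e., a probability distribution over the hidden states X. -/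
open scoped BigOperators

section ZSPOSG

variable {X U1 U2 Z1 Z2 : Type}
variable [Fintype X] [Fintype U1] [Fintype U2] [Fintype Z1] [Fintype Z2]

variable [DecidableEq X] [DecidableEq U1] [DecidableEq U2] [DecidableEq Z1] [DecidableEq Z2]

/-- The player-1 history determined by a player-2 history via `fpao`. -/
noncomputable def gdet (fpao : Z1 ⊕ Z2 → (Z1 × Z2) × (U1 × U2))
    {τ : ℕ} (o2 : Hist2 U2 Z2 τ) : Hist1 U1 Z1 τ :=
  fun i => ((fpao (Sum.inr (o2 i).2)).2.1, (fpao (Sum.inr (o2 i).2)).1.1)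

lemma trajProb_nonneg (p : X → U1 × U2 → X × (Z1 × Z2) → ℝ) (s0 : X → ℝ)
    (hp : ∀ x u, IsDist (p x u)) (hs0 : IsDist s0)
    (pol1 : (t : ℕ) → DR1 U1 Z1 t) (pol2 : (t : ℕ) → DR2 U2 Z2 t)
    (τ : ℕ) (w : Traj X U1 Z1 U2 Z2 τ) :
    0 ≤ trajProb p s0 pol1 pol2 τ w := by
  refine mul_nonneg (hs0.1 _) (Finset.prod_nonneg fun t _ => ?_)
  exact mul_nonneg (mul_nonneg (((pol1 t.1).2 _).1 _) (((pol2 t.1).2 _).1 _)) ((hp _ _).1 _)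

lemma occ_nonneg (p : X → U1 × U2 → X × (Z1 × Z2) → ℝ) (s0 : X → ℝ)
    (hp : ∀ x u, IsDist (p x u)) (hs0 : IsDist s0)
    (pol1 : (t : ℕ) → DR1 U1 Z1 t) (pol2 : (t : ℕ) → DR2 U2 Z2 t)
    (τ : ℕ) (xo : X × JHist U1 Z1 U2 Z2 τ) :
    0 ≤ occInduced p s0 pol1 pol2 τ xo := by
  simp only [occInduced]
  refine Finset.sum_nonneg fun w _ => ?_
  split
  · exact trajProb_nonneg p s0 hp hs0 pol1 pol2 τ w
  · exact le_rfl

lemma occ_eq_gdet (p : X → U1 × U2 → X × (Z1 × Z2) → ℝ) (s0 : X → ℝ)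
    (hp : ∀ x u, IsDist (p x u)) (hs0 : IsDist s0)
    (fpao : Z1 ⊕ Z2 → (Z1 × Z2) × (U1 × U2))
    (hpao : ∀ (x : X) (u : U1 × U2) (y : X) (z : Z1 × Z2), 0 < p x u (y, z) →
      fpao (Sum.inl z.1) = (z, u) ∧ fpao (Sum.inr z.2) = (z, u))
    (pol1 : (t : ℕ) → DR1 U1 Z1 t) (pol2 : (t : ℕ) → DR2 U2 Z2 t)
    (τ : ℕ) (x : X) (o1 : Hist1 U1 Z1 τ) (o2 : Hist2 U2 Z2 τ)
    (hpos : occInduced p s0 pol1 pol2 τ (x, (o1, o2)) ≠ 0) :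
    o1 = gdet fpao o2 := by
  classical
  simp only [occInduced] at hpos
  obtain ⟨w, hw⟩ : ∃ w : Traj X U1 Z1 U2 Z2 τ,
      (if w.1 (Fin.last τ) = x ∧ histUpTo τ w.2 τ le_rfl = (o1, o2)
        then trajProb p s0 pol1 pol2 τ w else 0) ≠ 0 := by
    by_contra hc
    push_neg at hc
    exact hpos (Finset.sum_eq_zero fun w _ => hc w)
  by_cases hcond : w.1 (Fin.last τ) = x ∧ histUpTo τ w.2 τ le_rfl = (o1, o2)
  swap
  · simp [hcond] at hw
  rw [if_pos hcond] at hw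
  have hpt : ∀ t : Fin τ, p (w.1 t.castSucc) ((w.2 t).1.1, (w.2 t).2.1)
      (w.1 t.succ, ((w.2 t).1.2, (w.2 t).2.2)) ≠ 0 := by
    intro t hz
    apply hw
    simp only [trajProb]
    rw [Finset.prod_eq_zero (Finset.mem_univ t) (by rw [hz]; ring)]
    ring
  have hppos : ∀ t : Fin τ, 0 < p (w.1 t.castSucc) ((w.2 t).1.1, (w.2 t).2.1)
      (w.1 t.succ, ((w.2 t).1.2, (w.2 t).2.2)) :=
    fun t => lt_of_le_of_ne ((hp _ _).1 _) (Ne.symm (hpt t))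
  have hcd := hcond.2
  simp only [histUpTo, Prod.mk.injEq] at hcd
  obtain ⟨ho1, ho2⟩ := hcd
  funext i
  have hci : Fin.castLE (le_refl τ) i = i := Fin.ext rfl
  have h1 : o1 i = (w.2 i).1 := by rw [← ho1]; simp [hci]
  have h2 : o2 i = (w.2 i).2 := by rw [← ho2]; simp [hci]
  have hf := (hpao _ _ _ _ (hppos i)).2
  simp only [gdet, h2, hf, h1]

open Classical in
/-- in a zs-POSG with public actions and observations (a function
`f_pao : Z¹ ⊕ Z² → Z × U` with `f_pao(z¹) = f_pao(z²) = (z, u)` whenever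
`p(y,z|x,u) > 0`), each player's history determines the joint history on the support of
any reachable occupancy state: for every player-2 history `o²` with positive marginal
there is exactly one player-1 history `o¹` with `Σ_x s_τ(x,(o¹,o²)) > 0`; consequently
the conditional occupancy state `s^{c,o²}_τ` is supported on a single player-1 history
and is determined by a belief state, i.e. a probability distribution over hidden
states. -/
theorem stmt11
    [Nonempty X] [Nonempty U1] [Nonempty U2] [Nonempty Z1] [Nonempty Z2]
    (p : X → U1 × U2 → X × (Z1 × Z2) → ℝ) (r : X → U1 × U2 → ℝ)
    (s0 : X → ℝ) (γ : ℝ) (ℓ : ℕ)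
    (hp : ∀ x u, IsDist (p x u)) (hs0 : IsDist s0) (hγ0 : 0 ≤ γ) (hγ1 : γ < 1)
    (fpao : Z1 ⊕ Z2 → (Z1 × Z2) × (U1 × U2))
    (hpao : ∀ (x : X) (u : U1 × U2) (y : X) (z : Z1 × Z2), 0 < p x u (y, z) →
      fpao (Sum.inl z.1) = (z, u) ∧ fpao (Sum.inr z.2) = (z, u))
    (pol1 : (t : ℕ) → DR1 U1 Z1 t) (pol2 : (t : ℕ) → DR2 U2 Z2 t)
    (τ : ℕ) (o2 : Hist2 U2 Z2 τ)
    (h : 0 < marg2 τ (occInduced p s0 pol1 pol2 τ) o2) :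
    (∃! o1 : Hist1 U1 Z1 τ,
        0 < ∑ x : X, occInduced p s0 pol1 pol2 τ (x, (o1, o2))) ∧
      ∃ (o1 : Hist1 U1 Z1 τ) (b : X → ℝ), IsDist b ∧
        ∀ (x : X) (o1' : Hist1 U1 Z1 τ),
          condOcc τ (occInduced p s0 pol1 pol2 τ) o2 (x, o1') =
            if o1' = o1 then b x else 0 := by
  classical
  set s := occInduced p s0 pol1 pol2 τ with hsdef
  set g := gdet fpao o2 with hgdef
  have hnn : ∀ xo, 0 ≤ s xo := fun xo => occ_nonneg p s0 hp hs0 pol1 pol2 τ xo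
  have hzero : ∀ (x : X) (o1 : Hist1 U1 Z1 τ), o1 ≠ g → s (x, (o1, o2)) = 0 := by
    intro x o1 hne
    by_contra hz
    exact hne (occ_eq_gdet p s0 hp hs0 fpao hpao pol1 pol2 τ x o1 o2 hz)
  have hmarg : marg2 τ s o2 = ∑ x : X, s (x, (g, o2)) := by
    unfold marg2
    refine Finset.sum_congr rfl fun x _ => ?_
    exact Finset.sum_eq_single g (fun o1 _ hne => hzero x o1 hne)
      (fun habs => absurd (Finset.mem_univ g) habs)
  have hA : 0 < ∑ x : X, s (x, (g, o2)) := hmarg ▸ h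
  constructor
  · refine ⟨g, hA, ?_⟩
    intro o1 hpos1
    by_contra hne
    have hz : ∑ x : X, s (x, (o1, o2)) = 0 :=
      Finset.sum_eq_zero fun x _ => hzero x o1 hne
    rw [hz] at hpos1
    exact lt_irrefl 0 hpos1
  · refine ⟨g, fun x => s (x, (g, o2)) / marg2 τ s o2, ⟨?_, ?_⟩, ?_⟩
    · exact fun x => div_nonneg (hnn _) h.le
    · rw [← Finset.sum_div, ← hmarg, div_self (ne_of_gt h)]
    · intro x o1'
      unfold condOcc
      by_cases he : o1' = g
      · simp [he]
      · simp [he, hzero x o1' he]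

end ZSPOSG
end
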